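/- arXiv:0906.2710 — 5 statements merged into one kernel-verified Lean document; each statement's English description precedes it below -/
import Mathlib

section
/- For every p(x) ∈ ℂ((x)), the formal series φ(x,z) := e^{z p(x) d/dx} x = Σ_{n≥0} (z^n/n!) (p(x) d/dx)^n x ∈ ℂ((x))[[z]] is an associate of the one-dimensional additive formal group F_a(x,y) = x+y; that is, φ(x,0) = x and φ(φ(x,x₂),x₀) = φ(x,x₀+x₂) in ℂ((x))[[x₀,x₂]]. -/
noncomputable section
open scoped Classical

abbrev L : Type := LaurentSeries ℂ
abbrev LZ : Type := PowerSeries L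

def Xl : L := HahnSeries.single 1 1

/-- coefficient of `z^n x^j` in an element of `ℂ((x))[[z]]`. -/
def lzCoeff (f : LZ) (n : ℕ) (j : ℤ) : ℂ := ((PowerSeries.coeff (R := L) n) f).coeff j

/-- integer powers in a commutative ring, via `Ring.inverse` for negative exponents. -/
def zpowR {R : Type*} [CommRing R] (g : R) (m : ℤ) : R :=
  if 0 ≤ m then g ^ m.toNat else Ring.inverse g ^ (-m).toNat

/-- the Laurent series with prescribed coefficients, when it exists (else `0`). -/
def mkL (c : ℤ → ℂ) : L :=
  if h : ∃ g : L, ∀ j, g.coeff j = c j then h.choose else 0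

def mkLZ (c : ℕ → ℤ → ℂ) : LZ :=
  if h : ∃ g : LZ, ∀ n j, lzCoeff g n j = c n j then h.choose else 0

/-- Substitution `f(φ(x,z))` of `φ(x,z) ∈ ℂ((x))[[z]]` into `f ∈ ℂ((x))`. -/
def substL (f : L) (φ : LZ) : LZ :=
  mkLZ fun n j => ∑ᶠ m : ℤ, f.coeff m * lzCoeff (zpowR φ m) n j

/-- `φ(φ(x,x₂),x₀)` as an element of `ℂ((x))[[x₂]][[x₀]]` (outer variable `x₀`). -/
def assocLHS (φ : LZ) : PowerSeries LZ :=
  PowerSeries.mk fun n => substL ((PowerSeries.coeff (R := L) n) φ) φ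

/-- `φ(x,x₀+x₂)` as an element of `ℂ((x))[[x₂]][[x₀]]` (outer variable `x₀`). -/
def assocRHS (φ : LZ) : PowerSeries LZ :=
  PowerSeries.mk fun n => PowerSeries.mk fun m =>
    (((n+m).choose n : ℂ)) • (PowerSeries.coeff (R := L) (n+m)) φ

/-- `φ(x,z) ∈ ℂ((x))[[z]]` is an associate of the additive formal group:
`φ(x,0) = x` and `φ(φ(x,x₂),x₀) = φ(x,x₀+x₂)`. -/
def IsAssociate (φ : LZ) : Prop :=
  (PowerSeries.constantCoeff (R := L)) φ = Xl ∧ assocLHS φ = assocRHS φ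

/-- the formal derivative `d/dx` on `ℂ((x))`. -/
def lderiv (f : L) : L := mkL fun j => ((j+1 : ℤ) : ℂ) * f.coeff (j+1)

/-- the operator `p(x) d/dx` on `ℂ((x))`. -/
def pd (p : L) : L → L := fun f => p * lderiv f

/-- `e^{z p(x) d/dx} x = Σ_{n≥0} (z^n/n!) (p(x)d/dx)^n x ∈ ℂ((x))[[z]]`. -/
def expFlow (p : L) : LZ :=
  PowerSeries.mk fun n => ((n.factorial : ℂ))⁻¹ • ((pd p)^[n] Xl)

-- ===== auxiliary development =====

lemma mkL_eq (c : ℤ → ℂ) (g : L) (h : ∀ j, g.coeff j = c j) : mkL c = g := by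
  have hex : ∃ g : L, ∀ j, g.coeff j = c j := ⟨g, h⟩
  rw [mkL, dif_pos hex]
  ext j
  rw [hex.choose_spec j, h j]

lemma lzCoeff_ext {g g' : LZ} (h : ∀ n j, lzCoeff g n j = lzCoeff g' n j) : g = g' := by
  ext n j
  exact h n j

lemma mkLZ_eq (c : ℕ → ℤ → ℂ) (g : LZ) (h : ∀ n j, lzCoeff g n j = c n j) : mkLZ c = g := by
  have hex : ∃ g : LZ, ∀ n j, lzCoeff g n j = c n j := ⟨g, h⟩
  rw [mkLZ, dif_pos hex]
  exact lzCoeff_ext fun n j => (hex.choose_spec n j).trans (h n j).symm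

/-- explicit derivative -/
def der (f : L) : L where
  coeff j := ((j+1 : ℤ) : ℂ) * f.coeff (j+1)
  isPWO_support' := by
    refine (f.isPWO_support.image_of_monotone (f := fun t => t - 1)
      (fun a b hab => sub_le_sub_right hab 1)).mono ?_
    intro j hj
    refine ⟨j + 1, ?_, by ring⟩
    simp only [Function.mem_support] at hj ⊢
    intro h0
    exact hj (by rw [h0, mul_zero])

@[simp] lemma lderiv_coeff (f : L) (j : ℤ) :
    (lderiv f).coeff j = ((j+1 : ℤ) : ℂ) * f.coeff (j+1) := by
  rw [lderiv, mkL_eq (fun j => ((j+1 : ℤ) : ℂ) * f.coeff (j+1)) (der f) (fun j => rfl)]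
  rfl

lemma lderiv_add (f g : L) : lderiv (f + g) = lderiv f + lderiv g := by
  ext j
  simp [HahnSeries.coeff_add]
  ring

lemma lderiv_smul (c : ℂ) (f : L) : lderiv (c • f) = c • lderiv f := by
  ext j
  simp [HahnSeries.coeff_smul]
  ring

lemma lderiv_one : lderiv (1 : L) = 0 := by
  ext j
  rw [lderiv_coeff]
  rcases eq_or_ne j (-1) with h | h
  · simp [h]
  · have : (1 : L).coeff (j + 1) = 0 := by
      rw [← HahnSeries.single_zero_one]
      exact HahnSeries.coeff_single_of_ne (by omega)
    rw [this, mul_zero, HahnSeries.coeff_zero]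

lemma lderiv_mul (f g : L) : lderiv (f * g) = f * lderiv g + lderiv f * g := by
  classical
  ext j
  -- enlarged supports
  have hFd : Set.IsPWO ((fun t => t - 1) '' f.support) :=
    f.isPWO_support.image_of_monotone (fun a b hab => sub_le_sub_right hab 1)
  have hGd : Set.IsPWO ((fun t => t - 1) '' g.support) :=
    g.isPWO_support.image_of_monotone (fun a b hab => sub_le_sub_right hab 1)
  have hfs : (lderiv f).support ⊆ (fun t => t - 1) '' f.support := by
    intro a ha
    rw [HahnSeries.mem_support, lderiv_coeff] at ha
    exact ⟨a + 1, fun h0 => ha (by rw [h0, mul_zero]), by ring⟩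
  have hgs : (lderiv g).support ⊆ (fun t => t - 1) '' g.support := by
    intro a ha
    rw [HahnSeries.mem_support, lderiv_coeff] at ha
    exact ⟨a + 1, fun h0 => ha (by rw [h0, mul_zero]), by ring⟩
  rw [HahnSeries.coeff_add, lderiv_coeff,
    HahnSeries.coeff_mul_left' hFd hfs, HahnSeries.coeff_mul_right' hGd hgs,
    HahnSeries.coeff_mul]
  -- reindex the two RHS sums
  have h1 : ∑ ij ∈ Finset.antidiagonal hFd g.isPWO_support j,
      (lderiv f).coeff ij.1 * g.coeff ij.2
      = ∑ ij ∈ Finset.antidiagonal f.isPWO_support g.isPWO_support (j+1),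
        ((ij.1 : ℂ)) * f.coeff ij.1 * g.coeff ij.2 := by
    refine Finset.sum_nbij' (fun ij => (ij.1 + 1, ij.2)) (fun ij => (ij.1 - 1, ij.2))
      ?_ ?_ ?_ ?_ ?_
    · rintro ⟨a, b⟩ hab
      rw [Finset.mem_antidiagonal] at hab ⊢
      obtain ⟨⟨t, ht, hta⟩, hb, hs⟩ := hab
      dsimp only at hta ⊢
      refine ⟨by rw [show a + 1 = t by omega]; exact ht, hb, by omega⟩
    · rintro ⟨a, b⟩ hab
      rw [Finset.mem_antidiagonal] at hab ⊢
      obtain ⟨ha, hb, hs⟩ := hab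
      exact ⟨⟨a, ha, rfl⟩, hb, by dsimp only; omega⟩
    · rintro ⟨a, b⟩ _; simp
    · rintro ⟨a, b⟩ _; simp
    · rintro ⟨a, b⟩ _
      dsimp only
      rw [lderiv_coeff]
  have h2 : ∑ ij ∈ Finset.antidiagonal f.isPWO_support hGd j,
      f.coeff ij.1 * (lderiv g).coeff ij.2
      = ∑ ij ∈ Finset.antidiagonal f.isPWO_support g.isPWO_support (j+1),
        f.coeff ij.1 * ((ij.2 : ℂ) * g.coeff ij.2) := by
    refine Finset.sum_nbij' (fun ij => (ij.1, ij.2 + 1)) (fun ij => (ij.1, ij.2 - 1))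
      ?_ ?_ ?_ ?_ ?_
    · rintro ⟨a, b⟩ hab
      rw [Finset.mem_antidiagonal] at hab ⊢
      obtain ⟨ha, ⟨t, ht, htb⟩, hs⟩ := hab
      dsimp only at htb ⊢
      refine ⟨ha, by rw [show b + 1 = t by omega]; exact ht, by omega⟩
    · rintro ⟨a, b⟩ hab
      rw [Finset.mem_antidiagonal] at hab ⊢
      obtain ⟨ha, hb, hs⟩ := hab
      exact ⟨ha, ⟨b, hb, rfl⟩, by dsimp only; omega⟩
    · rintro ⟨a, b⟩ _; simp
    · rintro ⟨a, b⟩ _; simp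
    · rintro ⟨a, b⟩ _
      dsimp only
      rw [lderiv_coeff]
  rw [h1, h2, Finset.mul_sum, ← Finset.sum_add_distrib]
  refine Finset.sum_congr rfl ?_
  rintro ⟨a, b⟩ hab
  rw [Finset.mem_antidiagonal] at hab
  obtain ⟨-, -, hs⟩ := hab
  dsimp only at hs ⊢
  have hc : ((j + 1 : ℤ) : ℂ) = (a : ℂ) + (b : ℂ) := by rw [← hs]; push_cast; ring
  rw [hc]
  ring

lemma coeff_sum {α : Type*} (s : Finset α) (F : α → L) (j : ℤ) :
    (∑ a ∈ s, F a).coeff j = ∑ a ∈ s, (F a).coeff j :=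
  map_sum (HahnSeries.coeff.addMonoidHom j) F s

lemma smul_support_subset (c : ℂ) (f : L) : (c • f).support ⊆ f.support := by
  intro a ha
  rw [HahnSeries.mem_support] at ha ⊢
  intro h
  apply ha
  rw [HahnSeries.coeff_smul, h, smul_zero]

instance : SMulCommClass ℂ L L := by
  refine ⟨fun c f g => ?_⟩
  rw [smul_eq_mul, smul_eq_mul]
  ext j
  rw [HahnSeries.coeff_smul, HahnSeries.coeff_mul,
    HahnSeries.coeff_mul_right' g.isPWO_support (smul_support_subset c g), Finset.smul_sum]
  refine Finset.sum_congr rfl fun ij _ => ?_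
  rw [HahnSeries.coeff_smul]
  simp only [smul_eq_mul]
  ring

instance : IsScalarTower ℂ L L := by
  refine ⟨fun c f g => ?_⟩
  rw [smul_eq_mul, smul_eq_mul]
  ext j
  rw [HahnSeries.coeff_mul_left' f.isPWO_support (smul_support_subset c f),
    HahnSeries.coeff_smul, HahnSeries.coeff_mul, Finset.smul_sum]
  refine Finset.sum_congr rfl fun ij _ => ?_
  rw [HahnSeries.coeff_smul]
  simp only [smul_eq_mul]
  ring

variable (p : L)

lemma pd_add (f g : L) : pd p (f + g) = pd p f + pd p g := by
  rw [pd, pd, pd, lderiv_add, mul_add]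

lemma pd_smul (c : ℂ) (f : L) : pd p (c • f) = c • pd p f := by
  rw [pd, pd, lderiv_smul, mul_smul_comm]

lemma pd_mul (f g : L) : pd p (f * g) = f * pd p g + pd p f * g := by
  simp only [pd, lderiv_mul, mul_add]
  ring

/-- `pd p` as a `ℂ`-linear endomorphism. -/
def pdLin : L →ₗ[ℂ] L where
  toFun := pd p
  map_add' := pd_add p
  map_smul' := pd_smul p

lemma pd_iterate_smul (n : ℕ) (c : ℂ) (f : L) :
    (pd p)^[n] (c • f) = c • (pd p)^[n] f := by
  induction n with
  | zero => simp
  | succ n ih =>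
    rw [Function.iterate_succ_apply', ih, pd_smul, Function.iterate_succ_apply' (pd p) n]

lemma lderiv_zero : lderiv (0 : L) = 0 := by
  ext j
  rw [lderiv_coeff, HahnSeries.coeff_zero, HahnSeries.coeff_zero, mul_zero]

lemma pd_zero : pd p 0 = 0 := by rw [pd, lderiv_zero, mul_zero]

lemma pd_one : pd p 1 = 0 := by rw [pd, lderiv_one, mul_zero]

/-- divided-power coefficients of the flow -/
def En (f : L) (n : ℕ) : L := ((n.factorial : ℂ))⁻¹ • ((pd p)^[n] f)

lemma En_zero (f : L) : En p f 0 = f := by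
  rw [En]
  simp only [Nat.factorial_zero, Nat.cast_one, inv_one, Function.iterate_zero, id_eq]
  exact one_smul ℂ f

lemma pd_En (f : L) (n : ℕ) :
    pd p (En p f n) = (((n+1 : ℕ) : ℂ)) • En p f (n+1) := by
  rw [En, En, pd_smul, Function.iterate_succ_apply' (pd p) n, smul_smul]
  congr 1
  rw [Nat.factorial_succ]
  have h1 : ((n.factorial : ℂ)) ≠ 0 := Nat.cast_ne_zero.mpr n.factorial_ne_zero
  have h2 : (((n+1 : ℕ)) : ℂ) ≠ 0 := Nat.cast_ne_zero.mpr (Nat.succ_ne_zero n)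
  rw [Nat.cast_mul, mul_inv, ← mul_assoc, mul_inv_cancel₀ h2, one_mul]

lemma En_succ (f : L) (n : ℕ) :
    En p f (n+1) = (((n+1 : ℕ) : ℂ))⁻¹ • pd p (En p f n) := by
  rw [pd_En, smul_smul, inv_mul_cancel₀ (Nat.cast_ne_zero.mpr (Nat.succ_ne_zero n))]
  exact (one_smul ℂ _).symm

lemma pd_finsum {α : Type*} (s : Finset α) (F : α → L) :
    pd p (∑ a ∈ s, F a) = ∑ a ∈ s, pd p (F a) :=
  map_sum (pdLin p) F s

lemma En_mul (f g : L) (n : ℕ) :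
    En p (f * g) n = ∑ k ∈ Finset.range (n+1), En p f k * En p g (n - k) := by
  induction n with
  | zero => simp [En_zero]
  | succ n ih =>
    have hterm : ∀ k ∈ Finset.range (n+1),
        pd p (En p f k * En p g (n - k))
          = (((k+1 : ℕ) : ℂ)) • (En p f (k+1) * En p g (n - k))
            + (((n - k + 1 : ℕ) : ℂ)) • (En p f k * En p g (n - k + 1)) := by
      intro k _
      rw [pd_mul, pd_En, pd_En, mul_smul_comm, smul_mul_assoc, add_comm]
    rw [En_succ, ih, pd_finsum, Finset.sum_congr rfl hterm]
    ext j
    rw [HahnSeries.coeff_smul, coeff_sum, coeff_sum]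
    simp only [HahnSeries.coeff_add, HahnSeries.coeff_smul, smul_eq_mul]
    -- now a computation in ℂ
    set c : ℕ → ℕ → ℂ := fun a b => (En p f a * En p g b).coeff j with hc
    have e1 : ∑ k ∈ Finset.range (n+1), ((k+1 : ℕ) : ℂ) * c (k+1) (n-k)
        = ∑ k ∈ Finset.range (n+2), ((k : ℕ) : ℂ) * c k (n+1-k) := by
      rw [Finset.sum_range_succ' (fun k => ((k : ℕ) : ℂ) * c k (n+1-k)) (n+1)]
      simp only [Nat.cast_zero, zero_mul, add_zero, Nat.cast_add, Nat.cast_one]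
      refine Finset.sum_congr rfl fun k hk => ?_
      rw [Finset.mem_range] at hk
      have : n + 1 - (k + 1) = n - k := by omega
      rw [this]
    have e2 : ∑ k ∈ Finset.range (n+1), ((n - k + 1 : ℕ) : ℂ) * c k (n-k+1)
        = ∑ k ∈ Finset.range (n+2), ((n + 1 - k : ℕ) : ℂ) * c k (n+1-k) := by
      rw [Finset.sum_range_succ (fun k => ((n + 1 - k : ℕ) : ℂ) * c k (n+1-k)) (n+1)]
      simp only [Nat.sub_self, Nat.cast_zero, zero_mul, add_zero]
      refine Finset.sum_congr rfl fun k hk => ?_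
      rw [Finset.mem_range] at hk
      have h1 : n - k + 1 = n + 1 - k := by omega
      rw [h1]
    rw [Finset.sum_add_distrib, e1, e2, ← Finset.sum_add_distrib, Finset.mul_sum]
    refine Finset.sum_congr rfl fun k hk => ?_
    rw [Finset.mem_range] at hk
    have hcast : ((k : ℕ) : ℂ) + ((n + 1 - k : ℕ) : ℂ) = ((n+1 : ℕ) : ℂ) := by
      rw [← Nat.cast_add]
      congr 1
      omega
    have hne : (((n+1 : ℕ)) : ℂ) ≠ 0 := Nat.cast_ne_zero.mpr (Nat.succ_ne_zero n)
    have hcomb : ((k : ℕ) : ℂ) * c k (n+1-k) + ((n + 1 - k : ℕ) : ℂ) * c k (n+1-k)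
        = ((n+1 : ℕ) : ℂ) * c k (n+1-k) := by rw [← add_mul, hcast]
    rw [hcomb, ← mul_assoc, inv_mul_cancel₀ hne, one_mul]

/-- the exponential flow map `f ↦ f(φ(x,z)) = Σ z^n/n! D^n f`. -/
def Ef (f : L) : LZ := PowerSeries.mk fun n => En p f n

lemma Ef_coeff (f : L) (n : ℕ) : (PowerSeries.coeff (R := L) n) (Ef p f) = En p f n :=
  PowerSeries.coeff_mk n _

lemma Ef_Xl : Ef p Xl = expFlow p := rfl

lemma Ef_one : Ef p 1 = 1 := by
  refine PowerSeries.ext fun n => ?_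
  rw [Ef_coeff]
  cases n with
  | zero => rw [En_zero, PowerSeries.coeff_zero_eq_constantCoeff, map_one]
  | succ n =>
    rw [PowerSeries.coeff_one]
    simp only [Nat.succ_ne_zero, if_false]
    rw [En]
    have h : (pd p)^[n+1] (1 : L) = 0 := by
      rw [Function.iterate_succ_apply, pd_one, Function.iterate_fixed (pd_zero p) n]
    rw [h, smul_zero]

lemma Ef_mul (f g : L) : Ef p (f * g) = Ef p f * Ef p g := by
  refine PowerSeries.ext fun n => ?_
  rw [Ef_coeff, PowerSeries.coeff_mul, Finset.Nat.sum_antidiagonal_eq_sum_range_succ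
    (fun a b => (PowerSeries.coeff (R := L) a) (Ef p f) * (PowerSeries.coeff (R := L) b) (Ef p g)) n,
    En_mul]
  exact Finset.sum_congr rfl fun k _ => by rw [Ef_coeff, Ef_coeff]

lemma Ef_pow (f : L) (k : ℕ) : Ef p (f ^ k) = (Ef p f) ^ k := by
  induction k with
  | zero => simpa using Ef_one p
  | succ k ih => rw [pow_succ, pow_succ, Ef_mul, ih]

lemma En_smul (c : ℂ) (f : L) (n : ℕ) : En p (c • f) n = c • En p f n := by
  rw [En, En, pd_iterate_smul]
  ext j
  simp only [HahnSeries.coeff_smul, smul_eq_mul]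
  ring

lemma constantCoeff_expFlow : (PowerSeries.constantCoeff (R := L)) (expFlow p) = Xl := by
  rw [expFlow, PowerSeries.constantCoeff_mk]
  simp only [Nat.factorial_zero, Nat.cast_one, inv_one, Function.iterate_zero, id_eq]
  exact one_smul ℂ Xl

lemma Xl_ne_zero : (Xl : L) ≠ 0 := HahnSeries.single_ne_zero one_ne_zero

lemma isUnit_expFlow : IsUnit (expFlow p) := by
  rw [PowerSeries.isUnit_iff_constantCoeff, constantCoeff_expFlow]
  exact (isUnit_iff_ne_zero).mpr (Xl_ne_zero)

lemma single_toNat (m : ℤ) (hm : 0 ≤ m) :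
    (HahnSeries.single m 1 : L) = Xl ^ m.toNat := by
  have h : ((m.toNat : ℤ)) = m := by omega
  rw [← h, Xl, HahnSeries.single_pow, one_pow, nsmul_eq_mul, mul_one, Int.toNat_natCast]

lemma Ef_single (m : ℤ) : Ef p (HahnSeries.single m 1) = zpowR (expFlow p) m := by
  rcases le_or_gt 0 m with hm | hm
  · rw [zpowR, if_pos hm, single_toNat m hm, Ef_pow, Ef_Xl]
  · rw [zpowR, if_neg (by omega)]
    set k := (-m).toNat with hk
    have h1 : (HahnSeries.single m 1 : L) * HahnSeries.single (-m) (1:ℂ) = 1 := by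
      rw [HahnSeries.single_mul_single, show m + -m = 0 by ring, one_mul,
        HahnSeries.single_zero_one]
    have h1' : (HahnSeries.single m 1 : L) * Xl ^ k = 1 := by
      rw [hk, ← single_toNat (-m) (by omega)]
      exact h1
    have h2 : Ef p (HahnSeries.single m 1) * (expFlow p) ^ k = 1 := by
      rw [← Ef_Xl, ← Ef_pow, ← Ef_mul, h1', Ef_one]
    have h3 : (Ring.inverse (expFlow p)) ^ k * (expFlow p) ^ k = 1 := by
      rw [← mul_pow, Ring.inverse_mul_cancel _ (isUnit_expFlow p), one_pow]
    calc Ef p (HahnSeries.single m 1)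
        = Ef p (HahnSeries.single m 1) * ((Ring.inverse (expFlow p)) ^ k * (expFlow p) ^ k) := by
          rw [h3, mul_one]
      _ = (Ef p (HahnSeries.single m 1) * (expFlow p) ^ k) * (Ring.inverse (expFlow p)) ^ k := by
          ring
      _ = (Ring.inverse (expFlow p)) ^ k := by rw [h2, one_mul]

/-- `T` only looks at coefficients `≤ j + w` to produce coefficient `j`. -/
def HasWindow (T : L →ₗ[ℂ] L) (w : ℤ) : Prop :=
  ∀ f : L, ∀ j : ℤ, (∀ m, m ≤ j + w → f.coeff m = 0) → (T f).coeff j = 0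

lemma hasWindow_comp {T S : L →ₗ[ℂ] L} {wT wS : ℤ} (hT : HasWindow T wT)
    (hS : HasWindow S wS) : HasWindow (T ∘ₗ S) (wT + wS) := by
  intro f j hf
  refine hT (S f) j fun m hm => ?_
  refine hS f m fun m' hm' => ?_
  exact hf m' (by omega)

lemma hasWindow_id : HasWindow LinearMap.id 0 := by
  intro f j hf
  exact hf j (by omega)

/-- `lderiv` as a linear map. -/
def derLin : L →ₗ[ℂ] L where
  toFun := lderiv
  map_add' := lderiv_add
  map_smul' := lderiv_smul

lemma hasWindow_derLin : HasWindow derLin 1 := by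
  intro f j hf
  show (lderiv f).coeff j = 0
  rw [lderiv_coeff, hf (j+1) (by omega), mul_zero]

/-- multiplication by `p` as a linear map. -/
def mulLin (p : L) : L →ₗ[ℂ] L where
  toFun f := p * f
  map_add' f g := mul_add p f g
  map_smul' c f := by
    dsimp only [RingHom.id_apply]
    ext j
    rw [HahnSeries.coeff_mul_right' f.isPWO_support (smul_support_subset c f),
      HahnSeries.coeff_smul, HahnSeries.coeff_mul, Finset.smul_sum]
    refine Finset.sum_congr rfl fun ij _ => ?_
    rw [HahnSeries.coeff_smul]
    simp only [smul_eq_mul]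
    ring

lemma hasWindow_mulLin (p : L) : HasWindow (mulLin p) (-p.order) := by
  intro f j hf
  show (p * f).coeff j = 0
  rw [HahnSeries.coeff_mul]
  refine Finset.sum_eq_zero fun ij hij => ?_
  rw [Finset.mem_addAntidiagonal] at hij
  obtain ⟨ha, hb, hs⟩ := hij
  rcases le_or_gt ij.2 (j + -p.order) with h | h
  · rw [hf ij.2 h, mul_zero]
  · have : ij.1 < p.order := by omega
    rw [HahnSeries.coeff_eq_zero_of_lt_order this, zero_mul]

lemma pdLin_eq : pdLin p = (mulLin p) ∘ₗ derLin := rfl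

lemma hasWindow_pdLin : HasWindow (pdLin p) (-p.order + 1) :=
  pdLin_eq p ▸ hasWindow_comp (hasWindow_mulLin p) hasWindow_derLin

lemma hasWindow_pdLin_pow (n : ℕ) : HasWindow (pdLin p ^ n) (n * (-p.order + 1)) := by
  induction n with
  | zero => simp only [pow_zero, Nat.cast_zero, zero_mul]; exact hasWindow_id
  | succ n ih =>
    have h := hasWindow_comp (hasWindow_pdLin p) ih
    have he : (pdLin p) ∘ₗ (pdLin p ^ n) = pdLin p ^ (n+1) := by
      rw [pow_succ']
      rfl
    rw [he] at h
    have harith : ((n+1 : ℕ) : ℤ) * (-p.order + 1)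
        = -p.order + 1 + (n : ℤ) * (-p.order + 1) := by push_cast; ring
    rw [harith]
    exact h

lemma hasWindow_smul (c : ℂ) {T : L →ₗ[ℂ] L} {w : ℤ} (hT : HasWindow T w) :
    HasWindow (c • T) w := by
  intro f j hf
  show (c • T f).coeff j = 0
  rw [HahnSeries.coeff_smul, hT f j hf, smul_zero]

/-- the key continuity lemma: coefficients of `T f` as a finite sum over coefficients of `f`. -/
lemma finsum_coeff (T : L →ₗ[ℂ] L) (w : ℤ) (hT : HasWindow T w) (f : L) (j : ℤ) :
    ∑ᶠ m : ℤ, f.coeff m * (T (HahnSeries.single m 1)).coeff j = (T f).coeff j := by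
  classical
  set s : Set ℤ := f.support ∩ Set.Iic (j + w) with hs
  have hfin : s.Finite := by
    rcases s.eq_empty_or_nonempty with h | h
    · rw [h]; exact Set.finite_empty
    · have hwf : s.IsWF := (f.isPWO_support.mono Set.inter_subset_left).isWF
      refine Set.Finite.subset (Set.finite_Icc (hwf.min h) (j + w)) fun x hx => ?_
      exact ⟨hwf.min_le h hx, hx.2⟩
  set g : L := ∑ m ∈ hfin.toFinset, f.coeff m • (HahnSeries.single m 1 : L) with hg
  have hgcoeff : ∀ m', g.coeff m' = if m' ∈ s then f.coeff m' else 0 := by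
    intro m'
    rw [hg, coeff_sum]
    rcases Classical.em (m' ∈ s) with h | h
    · rw [if_pos h]
      rw [Finset.sum_eq_single m']
      · rw [HahnSeries.coeff_smul, HahnSeries.coeff_single_same, smul_eq_mul, mul_one]
      · intro b _ hb
        rw [HahnSeries.coeff_smul, HahnSeries.coeff_single_of_ne (Ne.symm hb), smul_zero]
      · intro hm'
        exact absurd (hfin.mem_toFinset.mpr h) hm'
    · rw [if_neg h]
      refine Finset.sum_eq_zero fun b hb => ?_
      have hbs : b ∈ s := hfin.mem_toFinset.mp hb
      have hne : m' ≠ b := fun hh => h (hh ▸ hbs)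
      rw [HahnSeries.coeff_smul, HahnSeries.coeff_single_of_ne hne, smul_zero]
  have hdiff : ∀ m ≤ j + w, (f - g).coeff m = 0 := by
    intro m hm
    rw [HahnSeries.coeff_sub, hgcoeff m]
    rcases Classical.em (m ∈ f.support) with h | h
    · rw [if_pos ⟨h, hm⟩, sub_self]
    · rw [HahnSeries.mem_support, not_not] at h
      rw [h, ite_self, sub_zero]
  have hTfg : (T f).coeff j = (T g).coeff j := by
    have : T f = T g + T (f - g) := by rw [← map_add, add_sub_cancel]
    rw [this, HahnSeries.coeff_add, hT (f - g) j hdiff, add_zero]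
  have hTg : (T g).coeff j = ∑ m ∈ hfin.toFinset, f.coeff m * (T (HahnSeries.single m 1)).coeff j := by
    rw [hg, map_sum, coeff_sum]
    refine Finset.sum_congr rfl fun m _ => ?_
    rw [map_smul, HahnSeries.coeff_smul, smul_eq_mul]
  have hsupp : (Function.support fun m => f.coeff m * (T (HahnSeries.single m 1)).coeff j)
      ⊆ ↑hfin.toFinset := by
    intro m hm
    rw [Function.mem_support] at hm
    rw [Set.Finite.coe_toFinset]
    constructor
    · intro h0
      exact hm (by rw [h0, zero_mul])
    · rw [Set.mem_Iic]
      by_contra hgt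
      push_neg at hgt
      have : (T (HahnSeries.single m 1)).coeff j = 0 := by
        refine hT _ j fun m' hm' => ?_
        exact HahnSeries.coeff_single_of_ne (by omega)
      exact hm (by rw [this, mul_zero])
  rw [finsum_eq_sum_of_support_subset _ hsupp, hTfg, hTg]

lemma substL_expFlow (f : L) : substL f (expFlow p) = Ef p f := by
  refine mkLZ_eq _ _ fun n j => ?_
  set T : L →ₗ[ℂ] L := ((n.factorial : ℂ))⁻¹ • (pdLin p ^ n) with hT
  have hwin : HasWindow T ((n : ℤ) * (-p.order + 1)) :=
    hasWindow_smul _ (hasWindow_pdLin_pow p n)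
  have hTapp : ∀ h : L, T h = En p h n := by
    intro h
    show ((n.factorial : ℂ))⁻¹ • (pdLin p ^ n) h = En p h n
    rw [Module.End.pow_apply]
    rfl
  have key := finsum_coeff T _ hwin f j
  have hfun : ∀ m : ℤ, f.coeff m * lzCoeff (zpowR (expFlow p) m) n j
      = f.coeff m * (T (HahnSeries.single m 1)).coeff j := by
    intro m
    rw [← Ef_single, lzCoeff, Ef_coeff, hTapp]
  rw [lzCoeff, Ef_coeff, ← hTapp f, ← key]
  exact finsum_congr hfun |>.symm

lemma choose_inv_factorial (n m : ℕ) :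
    ((n.factorial : ℂ))⁻¹ * ((m.factorial : ℂ))⁻¹
      = (((n+m).choose n : ℂ)) * (((n+m).factorial : ℂ))⁻¹ := by
  have h0n : (n+m).choose n * n.factorial * m.factorial = (n+m).factorial := by
    have h := Nat.choose_mul_factorial_mul_factorial (Nat.le_add_right n m)
    simpa [Nat.add_sub_cancel_left] using h
  have h0 : (((n+m).choose n : ℂ)) * ((n.factorial : ℂ)) * ((m.factorial : ℂ))
      = (((n+m).factorial : ℕ) : ℂ) := by exact_mod_cast congrArg (Nat.cast (R := ℂ)) h0n
  have hc : (((n+m).choose n : ℕ) : ℂ) ≠ 0 :=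
    Nat.cast_ne_zero.mpr (Nat.choose_pos (Nat.le_add_right n m)).ne'
  rw [← h0, mul_inv, mul_inv, ← mul_assoc, ← mul_assoc, mul_inv_cancel₀ hc, one_mul]

theorem expFlow_isAssociate (p : L) : IsAssociate (expFlow p) := by
  refine ⟨constantCoeff_expFlow p, ?_⟩
  refine PowerSeries.ext fun n => ?_
  rw [assocLHS, assocRHS, PowerSeries.coeff_mk, PowerSeries.coeff_mk, substL_expFlow]
  refine PowerSeries.ext fun m => ?_
  rw [Ef_coeff, PowerSeries.coeff_mk, expFlow, PowerSeries.coeff_mk, PowerSeries.coeff_mk,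
    En_smul, En, ← Function.iterate_add_apply]
  have hmn : m + n = n + m := Nat.add_comm m n
  rw [hmn]
  ext j
  simp only [HahnSeries.coeff_smul, smul_eq_mul]
  rw [← mul_assoc, ← mul_assoc, choose_inv_factorial n m]

end
end

section
/- Every associate φ(x,z) of the additive formal group F_a(x,y) = x+y satisfies the formal differential equation ∂φ/∂z (x,z) = p(φ(x,z)) in ℂ((x))[[z]], where p(x) := ∂φ/∂z(x,0) ∈ ℂ((x)) and p(φ(x,z)) denotes the substitution of φ(x,z) into p. -/
noncomputable section
open scoped Classical

/-- the formal partial derivative `∂/∂z` on `ℂ((x))[[z]]`, computed coefficientwise. -/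
def zderivLZ (φ : LZ) : LZ :=
  PowerSeries.mk fun n => (((n : ℂ) + 1)) • (PowerSeries.coeff (R := L) (n+1)) φ

/-- Every associate `φ(x,z)` of `F_a(x,y) = x+y` satisfies the formal differential equation
`∂φ/∂z(x,z) = p(φ(x,z))` where `p(x) := ∂φ/∂z(x,0) ∈ ℂ((x))`. -/
theorem associate_satisfies_ode (φ : LZ) (h : IsAssociate φ) :
    zderivLZ φ = substL ((PowerSeries.coeff (R := L) 1) φ) φ := by
  have h2 := congrArg (PowerSeries.coeff (R := LZ) 1) h.2
  simp only [assocLHS, assocRHS, PowerSeries.coeff_mk] at h2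
  rw [h2]
  ext n
  simp [zderivLZ, PowerSeries.coeff_mk, Nat.add_comm 1 n, add_comm (n:ℂ) 1]

end
end

section
/- Let φ(x,z) be an associate of the additive formal group F_a(x,y) = x+y with φ(x,z) ≠ x. Then for any nonzero f(x₁,x) ∈ ℂ((x₁,x)), the substitution f(φ(x,z),x) is a nonzero element of ℂ((x))[[z]]. -/
noncomputable section
open scoped Classical

/-- the exponent `(a, b)` as a multidegree for two-variable power series. -/
def idx2 (a b : ℕ) : Fin 2 →₀ ℕ := Finsupp.single 0 a + Finsupp.single 1 b

/-- Substitution `p(φ(x,z), x)` of `x₁ = φ(x,z)`, `x₂ = x` into `p(x₁,x₂) ∈ ℂ[[x₁,x₂]]`. -/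
def substMv (p : MvPowerSeries (Fin 2) ℂ) (φ : LZ) : LZ :=
  mkLZ fun n j => ∑ᶠ ab : ℕ × ℕ,
    (MvPowerSeries.coeff (R := ℂ) (idx2 ab.1 ab.2) p) *
      lzCoeff (φ ^ ab.1 * (PowerSeries.C (R := L) Xl) ^ ab.2) n j

-- ################ auxiliary lemmas ################

lemma lzCoeff_zero (n : ℕ) (j : ℤ) : lzCoeff 0 n j = 0 := by
  simp [lzCoeff]

lemma lz_ext {f g : LZ} (h : ∀ n j, lzCoeff f n j = lzCoeff g n j) : f = g := by
  apply PowerSeries.ext; intro n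
  exact HahnSeries.coeff_injective (funext fun j => h n j)

lemma coeff_mul_Xlpow (w : L) (e : ℕ) (j : ℤ) (c : ℂ) :
    (w * (HahnSeries.single (e:ℤ) c)).coeff j = w.coeff (j - e) * c := by
  have := HahnSeries.coeff_mul_single_add (r := c) (x := w) (a := j - (e:ℤ)) (b := (e:ℤ))
  simpa using this

lemma hahn_coeff_sum (j : ℤ) (s : Finset ℕ) (f : ℕ → L) :
    (∑ i ∈ s, f i).coeff j = ∑ i ∈ s, (f i).coeff j :=
  map_sum (HahnSeries.coeff.addMonoidHom j) f s

lemma lz_formula (φ : LZ) (a b n : ℕ) (j : ℤ) :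
    lzCoeff (φ ^ a * (PowerSeries.C (R := L) Xl) ^ b) n j
      = ∑ k ∈ Finset.range (a+1), (a.choose k : ℂ) *
          ((PowerSeries.coeff (R := L) n ((φ - PowerSeries.C (R := L) Xl) ^ k)).coeff (j - ((a - k) + b : ℕ))) := by
  set ψ := φ - PowerSeries.C (R := L) Xl with hψ
  have hφ : φ = ψ + PowerSeries.C (R := L) Xl := by rw [hψ, sub_add_cancel]
  rw [hφ, add_pow, Finset.sum_mul, lzCoeff, map_sum, hahn_coeff_sum]
  apply Finset.sum_congr rfl
  intro k hk
  have : ψ ^ k * (PowerSeries.C (R := L) Xl) ^ (a-k) * ((a.choose k : ℕ) : LZ) * (PowerSeries.C (R := L) Xl) ^ b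
      = ψ ^ k * PowerSeries.C (R := L) (Xl ^ (a-k+b) * (a.choose k : L)) := by
    rw [← map_pow, ← map_pow, ← map_natCast (PowerSeries.C (R := L)) (a.choose k),
      mul_assoc, mul_assoc, ← map_mul, ← map_mul]
    congr 1
    rw [pow_add]; ring
  rw [this, PowerSeries.coeff_mul_C]
  have hXl : (Xl ^ (a-k+b) * ((a.choose k : ℕ) : L))
      = HahnSeries.single ((a-k+b : ℕ) : ℤ) ((a.choose k : ℂ)) := by
    rw [show ((a.choose k : ℕ) : L) = HahnSeries.single (0:ℤ) ((a.choose k : ℂ)) by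
          rw [← map_natCast (HahnSeries.C : ℂ →+* L) (a.choose k)]; rfl]
    rw [Xl, HahnSeries.single_pow, HahnSeries.single_mul_single]
    simp
  rw [hXl, coeff_mul_Xlpow]
  push_cast
  ring

lemma coeff_psi_pow_lt {ψ : LZ} (hψ : PowerSeries.constantCoeff (R := L) ψ = 0) {k n : ℕ} (hn : n < k) :
    PowerSeries.coeff (R := L) n (ψ ^ k) = 0 := by
  obtain ⟨c, rfl⟩ := (PowerSeries.X_dvd_iff).mpr hψ
  rw [mul_pow, PowerSeries.coeff_X_pow_mul']
  simp [hn.not_ge]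

lemma coeff_psi_pow_self {ψ : LZ} (hψ : PowerSeries.constantCoeff (R := L) ψ = 0) (k : ℕ) :
    PowerSeries.coeff (R := L) k (ψ ^ k) = (PowerSeries.coeff (R := L) 1 ψ) ^ k := by
  obtain ⟨c, rfl⟩ := (PowerSeries.X_dvd_iff).mpr hψ
  rw [mul_pow]
  have : (PowerSeries.coeff (R := L) (0 + k)) (PowerSeries.X ^ k * c ^ k) =
      PowerSeries.coeff (R := L) 0 (c ^ k) := PowerSeries.coeff_X_pow_mul _ _ _
  simp only [zero_add] at this
  rw [this]
  simp [PowerSeries.coeff_succ_X_mul, PowerSeries.coeff_zero_eq_constantCoeff, map_pow]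

-- substL of zero is zero
lemma substL_zero (φ : LZ) : substL 0 φ = 0 := by
  have hfun : (fun (n : ℕ) (j : ℤ) => ∑ᶠ m : ℤ, (0:L).coeff m * lzCoeff (zpowR φ m) n j)
      = fun _ _ => (0:ℂ) := by
    funext n j; simp
  rw [substL, hfun, mkLZ]
  have hex : ∃ g : LZ, ∀ n j, lzCoeff g n j = (fun (_ : ℕ) (_ : ℤ) => (0:ℂ)) n j :=
    ⟨0, fun n j => lzCoeff_zero n j⟩
  rw [dif_pos hex]
  apply lz_ext
  intro n j
  rw [hex.choose_spec n j, lzCoeff_zero]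

-- part B : the z-linear coefficient of an associate ≠ x is nonzero
lemma coeff_one_ne_zero {φ : LZ} (h : IsAssociate φ) (hx : φ ≠ PowerSeries.C (R := L) Xl) :
    PowerSeries.coeff (R := L) 1 φ ≠ 0 := by
  intro hq
  apply hx
  have h2 := congrArg (PowerSeries.coeff (R := LZ) 1) h.2
  rw [assocLHS, assocRHS, PowerSeries.coeff_mk, PowerSeries.coeff_mk, hq, substL_zero] at h2
  have hco : ∀ m : ℕ, PowerSeries.coeff (R := L) (1+m) φ = 0 := by
    intro m
    have := congrArg (PowerSeries.coeff (R := L) m) h2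
    rw [PowerSeries.coeff_mk, map_zero] at this
    have h1m : (((1+m).choose 1 : ℕ) : ℂ) ≠ 0 := by
      rw [Nat.choose_one_right]
      exact Nat.cast_ne_zero.mpr (by omega)
    apply HahnSeries.coeff_injective
    funext jj
    have hcj := congrArg (fun y : L => y.coeff jj) this.symm
    simp only [HahnSeries.coeff_smul, HahnSeries.coeff_zero, smul_eq_mul] at hcj
    have := (mul_eq_zero.mp hcj).resolve_left h1m
    simpa using this
  apply PowerSeries.ext
  intro n
  cases n with
  | zero =>
      simp only [PowerSeries.coeff_zero_eq_constantCoeff]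
      rw [h.1, PowerSeries.constantCoeff_C]
  | succ n =>
      rw [PowerSeries.coeff_C]
      simp only [Nat.succ_ne_zero, if_false]
      have := hco n
      rwa [add_comm 1 n] at this

-- the diagonal Hasse derivative coefficients
def Dc (p : MvPowerSeries (Fin 2) ℂ) (i t : ℕ) : ℂ :=
  ∑ a ∈ Finset.range (t+1), (a.choose i : ℂ) * MvPowerSeries.coeff (R := ℂ) (idx2 a (t-a)) p

lemma idx2_eq (d : Fin 2 →₀ ℕ) : d = idx2 (d 0) (d 1) := by
  apply Finsupp.ext
  intro x
  fin_cases x <;> simp [idx2, Finsupp.single_apply]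

lemma exists_Dc_ne {p : MvPowerSeries (Fin 2) ℂ} (hp : p ≠ 0) : ∃ i t, Dc p i t ≠ 0 := by
  by_contra hzero
  push_neg at hzero
  apply hp
  have key : ∀ b a : ℕ, MvPowerSeries.coeff (R := ℂ) (idx2 a b) p = 0 := by
    intro b
    induction b using Nat.strong_induction_on with
    | _ b IH =>
      intro a
      have h0 := hzero a (a + b)
      rw [Dc] at h0
      have hsingle : ∑ a' ∈ Finset.range (a+b+1),
          (a'.choose a : ℂ) * MvPowerSeries.coeff (R := ℂ) (idx2 a' (a+b-a')) p
          = (a.choose a : ℂ) * MvPowerSeries.coeff (R := ℂ) (idx2 a (a+b-a)) p := by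
        apply Finset.sum_eq_single
        · intro a' hmem hne
          rw [Finset.mem_range] at hmem
          rcases lt_or_gt_of_ne hne with hlt | hgt
          · rw [Nat.choose_eq_zero_of_lt hlt]
            simp
          · have hb : a + b - a' < b := by omega
            rw [IH _ hb a', mul_zero]
        · intro habs
          exact absurd (Finset.mem_range.mpr (by omega)) habs
      rw [hsingle] at h0
      have : a + b - a = b := by omega
      rw [this, Nat.choose_self] at h0
      simpa using h0
  ext d
  rw [map_zero, idx2_eq d]
  exact key (d 1) (d 0)

-- sum over a box equals sum over the triangle when terms above the antidiagonal vanish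
lemma sum_box_tri (K : ℕ) (f : ℕ → ℕ → ℂ) (hf : ∀ a b, K < a + b → f a b = 0) :
    ∑ a ∈ Finset.range (K+1), ∑ b ∈ Finset.range (K+1), f a b
      = ∑ t ∈ Finset.range (K+1), ∑ a ∈ Finset.range (t+1), f a (t - a) := by
  have hrhs : ∀ t, ∑ a ∈ Finset.range (t+1), f a (t - a)
      = ∑ ij ∈ Finset.HasAntidiagonal.antidiagonal t, f ij.1 ij.2 := by
    intro t
    rw [Finset.Nat.sum_antidiagonal_eq_sum_range_succ_mk]
  simp only [hrhs]
  rw [← Finset.sum_product']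
  rw [← Finset.sum_biUnion]
  · apply (Finset.sum_subset _ _).symm
    · intro ij hij
      simp only [Finset.mem_biUnion, Finset.mem_range] at hij
      obtain ⟨t, ht, hmem⟩ := hij
      rw [Finset.HasAntidiagonal.mem_antidiagonal] at hmem
      simp only [Finset.mem_product, Finset.mem_range]
      omega
    · intro ij hij hnot
      by_cases hle : ij.1 + ij.2 ≤ K
      · exfalso
        apply hnot
        simp only [Finset.mem_biUnion, Finset.mem_range]
        exact ⟨ij.1 + ij.2, by omega, Finset.HasAntidiagonal.mem_antidiagonal.mpr rfl⟩
      · exact hf ij.1 ij.2 (by omega)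
  · intro s _ t _ hst
    apply Finset.disjoint_left.mpr
    intro ij hs ht
    simp only [Finset.HasAntidiagonal.mem_antidiagonal] at hs ht
    exact hst (hs ▸ ht)



/-- Let `φ(x,z)` be an associate of `F_a(x,y) = x+y` with `φ(x,z) ≠ x`.  Then for any nonzero
`f(x₁,x) ∈ ℂ((x₁,x))`, the substitution `f(φ(x,z),x)` is a nonzero element of `ℂ((x))[[z]]`.
Here every element of `ℂ((x₁,x₂)) = ∪_N (x₁x₂)^{−N} ℂ[[x₁,x₂]]` is written as
`f = (x₁x₂)^{−N} p` with `p ∈ ℂ[[x₁,x₂]]` (so `f ≠ 0` iff `p ≠ 0`), and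
`f(φ(x,z),x) = (φ(x,z)·x)^{−N} · p(φ(x,z),x)`. -/
theorem substitution_ne_zero (φ : LZ) (h : IsAssociate φ) (hx : φ ≠ PowerSeries.C (R := L) Xl)
    (N : ℕ) (p : MvPowerSeries (Fin 2) ℂ) (hp : p ≠ 0) :
    (Ring.inverse (φ * PowerSeries.C (R := L) Xl)) ^ N * substMv p φ ≠ 0 := by
  have hψ0 : PowerSeries.constantCoeff (R := L) (φ - PowerSeries.C (R := L) Xl) = 0 := by
    rw [map_sub, h.1, PowerSeries.constantCoeff_C, sub_self]
  set q : L := PowerSeries.coeff (R := L) 1 (φ - PowerSeries.C (R := L) Xl) with hqdef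
  have hq : q ≠ 0 := by
    have h1 : q = PowerSeries.coeff (R := L) 1 φ := by
      rw [hqdef, map_sub, PowerSeries.coeff_C]
      simp
    rw [h1]
    exact coeff_one_ne_zero h hx
  have horder : ∀ (x : L) (t : ℤ), t < x.order → x.coeff t = 0 :=
    fun x t ht => HahnSeries.coeff_eq_zero_of_lt_order ht
  have hwlt : ∀ n k : ℕ, n < k →
      PowerSeries.coeff (R := L) n ((φ - PowerSeries.C (R := L) Xl) ^ k) = 0 :=
    fun n k hn => coeff_psi_pow_lt hψ0 hn
  set M : ℕ → ℤ := fun n => (Finset.range (n+1)).inf' ⟨0, by simp⟩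
    (fun k => (PowerSeries.coeff (R := L) n ((φ - PowerSeries.C (R := L) Xl) ^ k)).order) with hMdef
  have hM : ∀ n k : ℕ, k ≤ n →
      M n ≤ (PowerSeries.coeff (R := L) n ((φ - PowerSeries.C (R := L) Xl) ^ k)).order := by
    intro n k hk
    exact Finset.inf'_le _ (Finset.mem_range.mpr (by omega))
  -- basic vanishing bound for coefficients of `φ^a x^b`
  have hvan : ∀ (n : ℕ) (j : ℤ) (a b : ℕ), j < M n →
      lzCoeff (φ ^ a * (PowerSeries.C (R := L) Xl) ^ b) n j = 0 := by
    intro n j a b hj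
    rw [lz_formula]
    apply Finset.sum_eq_zero
    intro k hk
    rcases le_or_gt k n with hkn | hkn
    · have hz : ((PowerSeries.coeff (R := L) n ((φ - PowerSeries.C (R := L) Xl) ^ k)).coeff
          (j - ((a - k) + b : ℕ))) = 0 := by
        apply horder
        have h1 : (j - ((a - k) + b : ℕ)) ≤ j := by
          have h2 : (0:ℤ) ≤ ((a - k) + b : ℕ) := Int.natCast_nonneg _
          omega
        exact lt_of_le_of_lt h1 (lt_of_lt_of_le hj (hM n k hkn))
      rw [hz, mul_zero]
    · rw [hwlt n k hkn]
      simp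
  have hcvan : ∀ (n : ℕ) (j : ℤ), j < M n →
      (∑ᶠ ab : ℕ × ℕ, (MvPowerSeries.coeff (R := ℂ) (idx2 ab.1 ab.2) p) *
        lzCoeff (φ ^ ab.1 * (PowerSeries.C (R := L) Xl) ^ ab.2) n j) = 0 := by
    intro n j hj
    apply finsum_eq_zero_of_forall_eq_zero
    intro ab
    rw [hvan n j ab.1 ab.2 hj, mul_zero]
  -- existence of the substituted series
  have hex : ∃ g : LZ, ∀ n j, lzCoeff g n j =
      ∑ᶠ ab : ℕ × ℕ, (MvPowerSeries.coeff (R := ℂ) (idx2 ab.1 ab.2) p) *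
        lzCoeff (φ ^ ab.1 * (PowerSeries.C (R := L) Xl) ^ ab.2) n j := by
    have hpwo : ∀ n : ℕ, (Function.support (fun j : ℤ => ∑ᶠ ab : ℕ × ℕ,
        (MvPowerSeries.coeff (R := ℂ) (idx2 ab.1 ab.2) p) *
          lzCoeff (φ ^ ab.1 * (PowerSeries.C (R := L) Xl) ^ ab.2) n j)).IsPWO := by
      intro n
      apply Set.IsPWO.mono (Set.IsWF.isPWO ((bddBelow_Ici (a := M n)).wellFoundedOn_lt))
      intro j hj
      simp only [Function.mem_support] at hj
      by_contra hjlt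
      simp only [Set.mem_Ici, not_le] at hjlt
      exact hj (hcvan n j hjlt)
    refine ⟨PowerSeries.mk fun n => (⟨fun j => ∑ᶠ ab : ℕ × ℕ,
      (MvPowerSeries.coeff (R := ℂ) (idx2 ab.1 ab.2) p) *
        lzCoeff (φ ^ ab.1 * (PowerSeries.C (R := L) Xl) ^ ab.2) n j, hpwo n⟩ : L), ?_⟩
    intro n j
    rw [lzCoeff, PowerSeries.coeff_mk]
  have hlz : ∀ n j, lzCoeff (substMv p φ) n j =
      ∑ᶠ ab : ℕ × ℕ, (MvPowerSeries.coeff (R := ℂ) (idx2 ab.1 ab.2) p) *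
        lzCoeff (φ ^ ab.1 * (PowerSeries.C (R := L) Xl) ^ ab.2) n j := by
    intro n j
    rw [substMv, mkLZ, dif_pos hex]
    exact hex.choose_spec n j
  -- locate the leading data of p
  have ex : ∃ i, ∃ t, Dc p i t ≠ 0 := exists_Dc_ne hp
  set r : ℕ := Nat.find ex with hrdef
  have hr_spec : ∃ t, Dc p r t ≠ 0 := Nat.find_spec ex
  have hrmin : ∀ i < r, ∀ t, Dc p i t = 0 := by
    intro i hi t
    have h1 := Nat.find_min ex hi
    push_neg at h1
    exact h1 t
  set t₀ : ℕ := Nat.find hr_spec with ht₀def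
  have ht₀ : Dc p r t₀ ≠ 0 := Nat.find_spec hr_spec
  have ht₀min : ∀ t < t₀, Dc p r t = 0 := by
    intro t ht
    have h1 := Nat.find_min hr_spec ht
    push_neg at h1
    exact h1
  have hrt₀ : r ≤ t₀ := by
    by_contra hlt
    push_neg at hlt
    apply ht₀
    rw [Dc]
    apply Finset.sum_eq_zero
    intro a ha
    rw [Finset.mem_range] at ha
    rw [Nat.choose_eq_zero_of_lt (by omega)]
    simp
  -- leading coefficient of `ψ^r`
  have hqr : q ^ r ≠ 0 := pow_ne_zero r hq
  have hwrr : PowerSeries.coeff (R := L) r ((φ - PowerSeries.C (R := L) Xl) ^ r) = q ^ r :=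
    coeff_psi_pow_self hψ0 r
  set m₀ : ℤ := (q ^ r : L).order with hm₀def
  set M' : ℤ := min (M r) m₀ with hM'def
  set j : ℤ := m₀ + (t₀ : ℤ) - r with hjdef
  have hjnn : (0:ℤ) ≤ j + r - M' := by
    have h1 : M' ≤ m₀ := min_le_right _ _
    omega
  set K : ℕ := (j + (r:ℤ) - M').toNat with hKdef
  have hKz : (K : ℤ) = j + r - M' := Int.toNat_of_nonneg hjnn
  have ht₀K : t₀ ≤ K := by
    have h1 : M' ≤ m₀ := min_le_right _ _
    omega
  have hrK : r ≤ K := le_trans hrt₀ ht₀K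
  -- coefficients vanish past the `K`-th antidiagonal
  have hco : ∀ (k : ℕ), k ≤ r → ∀ (t : ℤ), (K:ℤ) < t →
      ((PowerSeries.coeff (R := L) r ((φ - PowerSeries.C (R := L) Xl) ^ k)).coeff (j - t + k)) = 0 := by
    intro k hk t ht
    apply horder
    have h2 : M' ≤ M r := min_le_left _ _
    have h3 : M r ≤ (PowerSeries.coeff (R := L) r ((φ - PowerSeries.C (R := L) Xl) ^ k)).order := hM r k hk
    omega
  -- support of the finsum is inside the box
  have hsupp : Function.support (fun ab : ℕ × ℕ =>
        (MvPowerSeries.coeff (R := ℂ) (idx2 ab.1 ab.2) p) *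
          lzCoeff (φ ^ ab.1 * (PowerSeries.C (R := L) Xl) ^ ab.2) r j) ⊆
      ↑((Finset.range (K+1)) ×ˢ (Finset.range (K+1))) := by
    intro ab hab
    by_contra hnot
    apply hab
    simp only [Finset.coe_product, Set.mem_prod, Finset.mem_coe, Finset.mem_range] at hnot
    have habk : K < ab.1 + ab.2 := by omega
    have hz : lzCoeff (φ ^ ab.1 * (PowerSeries.C (R := L) Xl) ^ ab.2) r j = 0 := by
      rw [lz_formula]
      apply Finset.sum_eq_zero
      intro k hk
      rw [Finset.mem_range] at hk
      rcases le_or_gt k r with hkr | hkr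
      · have hidx : (j - ((ab.1 - k) + ab.2 : ℕ)) = j - ((ab.1 : ℤ) + ab.2) + k := by
          have h4 : (((ab.1 - k) + ab.2 : ℕ) : ℤ) = (ab.1 : ℤ) - k + ab.2 := by
            push_cast [Nat.cast_sub (by omega : k ≤ ab.1)]
            ring
          rw [h4]; ring
        rw [hidx, hco k hkr ((ab.1 : ℤ) + ab.2)
          (by exact_mod_cast (by omega : ((K:ℕ):ℤ) < ((ab.1 + ab.2 : ℕ) : ℤ))), mul_zero]
      · rw [hwlt r k hkr]
        simp
    simp only [hz, mul_zero]
  have hfin : (∑ᶠ ab : ℕ × ℕ, (MvPowerSeries.coeff (R := ℂ) (idx2 ab.1 ab.2) p) *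
        lzCoeff (φ ^ ab.1 * (PowerSeries.C (R := L) Xl) ^ ab.2) r j)
      = ∑ ab ∈ (Finset.range (K+1)) ×ˢ (Finset.range (K+1)),
          (MvPowerSeries.coeff (R := ℂ) (idx2 ab.1 ab.2) p) *
            lzCoeff (φ ^ ab.1 * (PowerSeries.C (R := L) Xl) ^ ab.2) r j :=
    finsum_eq_sum_of_support_subset _ hsupp
  -- rewrite each term uniformly
  have hterm : ∀ a ∈ Finset.range (K+1), ∀ b ∈ Finset.range (K+1),
      (MvPowerSeries.coeff (R := ℂ) (idx2 a b) p) *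
          lzCoeff (φ ^ a * (PowerSeries.C (R := L) Xl) ^ b) r j =
      ∑ k ∈ Finset.range (K+1), (MvPowerSeries.coeff (R := ℂ) (idx2 a b) p) * (a.choose k : ℂ) *
        ((PowerSeries.coeff (R := L) r ((φ - PowerSeries.C (R := L) Xl) ^ k)).coeff (j - ((a:ℤ) + b) + k)) := by
    intro a ha b hb
    rw [Finset.mem_range] at ha hb
    rw [lz_formula, Finset.mul_sum]
    rw [← Finset.sum_subset (Finset.range_subset_range.mpr (by omega : a + 1 ≤ K + 1))
      (by
        intro k _ hka
        rw [Finset.mem_range, not_lt] at hka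
        rw [Nat.choose_eq_zero_of_lt (by omega)]
        simp)]
    apply Finset.sum_congr rfl
    intro k hk
    rw [Finset.mem_range] at hk
    have hka : k ≤ a := by omega
    have hidx : (j - ((a - k) + b : ℕ)) = j - ((a : ℤ) + b) + k := by
      have h4 : (((a - k) + b : ℕ) : ℤ) = (a : ℤ) - k + b := by
        push_cast [Nat.cast_sub hka]
        ring
      rw [h4]; ring
    rw [hidx]
    ring
  -- the triangle sums
  have hksum : ∀ k : ℕ, k ≤ r →
      (∑ a ∈ Finset.range (K+1), ∑ b ∈ Finset.range (K+1),
        (MvPowerSeries.coeff (R := ℂ) (idx2 a b) p) * (a.choose k : ℂ) *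
          ((PowerSeries.coeff (R := L) r ((φ - PowerSeries.C (R := L) Xl) ^ k)).coeff (j - ((a:ℤ) + b) + k)))
      = ∑ t ∈ Finset.range (K+1),
          ((PowerSeries.coeff (R := L) r ((φ - PowerSeries.C (R := L) Xl) ^ k)).coeff (j - t + k)) * Dc p k t := by
    intro k hk
    rw [sum_box_tri K _ (by
      intro a b hab
      rw [hco k hk ((a:ℤ)+b) (by exact_mod_cast (by omega : ((K:ℕ):ℤ) < ((a + b : ℕ):ℤ))), mul_zero])]
    apply Finset.sum_congr rfl
    intro t ht
    rw [Dc, Finset.mul_sum]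
    apply Finset.sum_congr rfl
    intro a ha
    rw [Finset.mem_range] at ha
    have h5 : ((a:ℤ) + ((t - a : ℕ) : ℤ)) = (t:ℤ) := by
      push_cast [Nat.cast_sub (by omega : a ≤ t)]
      ring
    rw [h5]
    ring
  -- assemble : the z^r coefficient of the substitution is nonzero at x^j
  have hcrj : (∑ᶠ ab : ℕ × ℕ, (MvPowerSeries.coeff (R := ℂ) (idx2 ab.1 ab.2) p) *
        lzCoeff (φ ^ ab.1 * (PowerSeries.C (R := L) Xl) ^ ab.2) r j) ≠ 0 := by
    rw [hfin, Finset.sum_product]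
    rw [Finset.sum_congr rfl (fun a ha => Finset.sum_congr rfl (fun b hb => hterm a ha b hb))]
    rw [Finset.sum_congr rfl (fun a _ => Finset.sum_comm), Finset.sum_comm]
    rw [Finset.sum_eq_single r
      (by
        intro k hkmem hkne
        rcases lt_or_gt_of_ne hkne with hkr | hkr
        · rw [hksum k (le_of_lt hkr)]
          apply Finset.sum_eq_zero
          intro t _
          rw [hrmin k hkr t, mul_zero]
        · apply Finset.sum_eq_zero
          intro a _
          apply Finset.sum_eq_zero
          intro b _
          rw [hwlt r k hkr]
          simp)
      (by
        intro habs
        exact absurd (Finset.mem_range.mpr (by omega)) habs)]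
    rw [hksum r le_rfl]
    rw [Finset.sum_eq_single t₀
      (by
        intro t htmem htne
        rcases lt_or_gt_of_ne htne with htlt | htgt
        · rw [ht₀min t htlt, mul_zero]
        · rw [hwrr]
          have hidx : j - (t:ℤ) + r = m₀ + (t₀ : ℤ) - t := by rw [hjdef]; ring
          rw [hidx, horder _ _ (show m₀ + (t₀:ℤ) - (t:ℤ) < m₀ by omega), zero_mul])
      (by
        intro habs
        exact absurd (Finset.mem_range.mpr (by omega)) habs)]
    rw [hwrr]
    have hidx : j - (t₀:ℤ) + r = m₀ := by rw [hjdef]; ring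
    rw [hidx]
    exact mul_ne_zero (mt HahnSeries.coeff_order_eq_zero.mp hqr) ht₀
  have hS : substMv p φ ≠ 0 := by
    intro h0
    apply hcrj
    rw [← hlz r j, h0, lzCoeff_zero]
  -- the prefactor is invertible, hence nonzero
  have hXl : Xl ≠ 0 := HahnSeries.single_ne_zero one_ne_zero
  have hunit : IsUnit (φ * PowerSeries.C (R := L) Xl) := by
    rw [PowerSeries.isUnit_iff_constantCoeff, map_mul, h.1, PowerSeries.constantCoeff_C]
    exact isUnit_iff_ne_zero.mpr (mul_ne_zero hXl hXl)
  have hinv : Ring.inverse (φ * PowerSeries.C (R := L) Xl) ≠ 0 := by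
    intro h0
    have h1 := Ring.inverse_mul_cancel _ hunit
    rw [h0, zero_mul] at h1
    exact zero_ne_one h1
  exact mul_ne_zero (pow_ne_zero N hinv) hS

end
end

section
/- Let φ(x,z) be an associate of the additive formal group F_a(x,y) = x+y. Then φ(φ(x,z),−z) = x and φ(φ(x,−z),z) = x in ℂ((x))[[z]], where φ(x,−z) denotes the image of φ(x,z) under the substitution z ↦ −z. -/
noncomputable section
open scoped Classical

/-- Evaluation of `F ∈ ℂ((x))[[x₂]][[x₀]]` (outer variable `x₀`) at `x₀ = a·z`, `x₂ = b·z`: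
the coefficient of `z^k` is `Σ_{n+m=k} a^n b^m F_{n,m}`. -/
def diagEval (a b : ℂ) (F : PowerSeries LZ) : LZ :=
  PowerSeries.mk fun k => ∑ n ∈ Finset.range (k+1),
    (a ^ n * b ^ (k - n)) • (PowerSeries.coeff (R := L) (k - n)) ((PowerSeries.coeff (R := LZ) n) F)

lemma diag_aux (φ : LZ) (a b : ℂ) (hab : a + b = 0)
    (h0 : (PowerSeries.constantCoeff (R := L)) φ = Xl) :
    diagEval a b (assocRHS φ) = PowerSeries.C (R := L) Xl := by
  ext k
  rw [diagEval, PowerSeries.coeff_mk]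
  have hsum : ∀ n ∈ Finset.range (k+1),
      (a ^ n * b ^ (k - n)) • (PowerSeries.coeff (R := L) (k - n))
        ((PowerSeries.coeff (R := LZ) n) (assocRHS φ))
      = (a ^ n * b ^ (k - n) * (k.choose n : ℂ)) • (PowerSeries.coeff (R := L) k) φ := by
    intro n hn
    have hnk : n + (k - n) = k := Nat.add_sub_cancel' (Nat.lt_succ_iff.mp (Finset.mem_range.mp hn))
    rw [assocRHS, PowerSeries.coeff_mk, PowerSeries.coeff_mk, hnk, smul_smul]
  rw [Finset.sum_congr rfl hsum, ← Finset.sum_smul, ← add_pow, hab]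
  rcases Nat.eq_zero_or_pos k with hk | hk
  · subst hk
    simp [h0]
  · rw [zero_pow hk.ne', zero_smul, PowerSeries.coeff_C, if_neg hk.ne']

/-- For an associate `φ` of `F_a`: `φ(φ(x,z),−z) = x` and `φ(φ(x,−z),z) = x`,
where these are the images of `φ(φ(x,x₂),x₀)` under `x₀ = ∓z`, `x₂ = ±z`. -/
theorem associate_inverse (φ : LZ) (h : IsAssociate φ) :
    diagEval (-1) 1 (assocLHS φ) = PowerSeries.C (R := L) Xl ∧
      diagEval 1 (-1) (assocLHS φ) = PowerSeries.C (R := L) Xl := by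
  rw [h.2]
  exact ⟨diag_aux φ (-1) 1 (by ring) h.1, diag_aux φ 1 (-1) (by ring) h.1⟩

end
end

section
/- Let φ(x,z) be an associate of the additive formal group F_a(x,y) = x+y with φ(x,z) ≠ x, and let W be a complex vector space. Then every compatible subset of ℰ(W) is φ-quasi compatible, and every quasi compatible subset of ℰ(W) is φ-quasi compatible. -/
noncomputable section
open scoped Classical

variable (W : Type) [AddCommGroup W] [Module ℂ W]

/-- `ℰ(W) = Hom(W, W((x)))`. -/
abbrev EW := W →ₗ[ℂ] HahnSeries ℤ W

variable {W}

/-- the element of `ℰ(W)` with prescribed coefficients, when it exists (else `0`). -/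
def mkEW (c : W → ℤ → W) : EW W :=
  if h : ∃ g : EW W, ∀ w j, (g w).coeff j = c w j then h.choose else 0

/-- the identity operator `1_W`, as the element `1_W x^0` of `ℰ(W)`. -/
def oneEW : EW W := mkEW fun w j => if j = 0 then w else 0

/-- the raw coefficient function of `a(x₁)b(x₂)` : coefficient of `x₁^m x₂^n` applied to `w`. -/
def c2 (a b : EW W) (w : W) (m n : ℤ) : W := (a ((b w).coeff n)).coeff m

/-- the raw coefficient function of `u(x₂)v(x₁)` (first index: exponent of `x₁`). -/
def c2swap (u v : EW W) (w : W) (m n : ℤ) : W := (u ((v w).coeff m)).coeff n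

/-- a raw two-variable series `W → W[[x₁^{±1},x₂^{±1}]]` lies in `Hom(W, W((x₁,x₂)))`. -/
def IsLT2 (F : W → ℤ → ℤ → W) : Prop :=
  ∀ w, ∃ N : ℤ, ∀ m n : ℤ, (m < N ∨ n < N) → F w m n = 0

/-- multiplication of a raw two-variable series by `p(x₁,x₂) ∈ ℂ[[x₁,x₂]]`. -/
def ps2Smul (p : MvPowerSeries (Fin 2) ℂ) (F : W → ℤ → ℤ → W) : W → ℤ → ℤ → W :=
  fun w m n => ∑ᶠ ab : ℕ × ℕ,
    (MvPowerSeries.coeff (R := ℂ) (idx2 ab.1 ab.2) p) • F w (m - ab.1) (n - ab.2)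

/-- multiplication of a raw series in `(z, x)` by `s ∈ ℂ((x))[[z]]`
(first index: exponent of `z`; second: exponent of `x`). -/
def lzSmul (s : LZ) (F : W → ℤ → ℤ → W) : W → ℤ → ℤ → W :=
  fun w n j => ∑ᶠ ab : ℕ × ℤ, lzCoeff s ab.1 ab.2 • F w (n - ab.1) (j - ab.2)

/-- substitution `x₁ = φ(x,z)` into a raw two-variable series `F(x₁, x₂)` (with `x₂` renamed
to `x`); the result is indexed by (exponent of `z`, exponent of `x`). -/
def substX1 (φ : LZ) (F : W → ℤ → ℤ → W) : W → ℤ → ℤ → W :=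
  fun w n j =>
    if 0 ≤ n then
      ∑ᶠ mk : ℤ × ℤ, lzCoeff (zpowR φ mk.1) n.toNat (j - mk.2) • F w mk.1 mk.2
    else 0

/-- `Y_ℰ^φ(a(x),z)b(x)`, as a raw series (first index: exponent of `z`; second: exponent
of `x`): the unique element `Y` of `ℰ(W)((z))` with `p(φ(x,z),x)·Y = (p(x₁,x)a(x₁)b(x))|_{x₁=φ(x,z)}`
for a (any) modifier `p` as in the definition of φ-quasi compatibility; junk `0` if none exists. -/
def Yφ (φ : LZ) (a b : EW W) : W → ℤ → ℤ → W :=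
  if h : ∃ Y : W → ℤ → ℤ → W,
      (∃ n₀ : ℤ, ∀ w n j, n < n₀ → Y w n j = 0) ∧
      (∀ n : ℤ, ∃ c : EW W, ∀ w j, (c w).coeff j = Y w n j) ∧
      ∃ p : MvPowerSeries (Fin 2) ℂ, substMv p φ ≠ 0 ∧ IsLT2 (ps2Smul p (c2 a b)) ∧
        lzSmul (substMv p φ) Y = substX1 φ (ps2Smul p (c2 a b))
  then h.choose else fun _ _ _ => 0

/-- the coefficient of `z^n` in `Y_ℰ^φ(a(x),z)b(x)`, as an element of `ℰ(W)`. -/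
def YatZ (φ : LZ) (a b : EW W) (n : ℤ) : EW W :=
  mkEW fun w j => Yφ φ a b w n j

/-- `a(x)_n^φ b(x)`, the coefficient of `z^{-n-1}` in `Y_ℰ^φ(a(x),z)b(x)`. -/
def YφCoef (φ : LZ) (a b : EW W) (n : ℤ) : EW W := YatZ φ a b (-n-1)

/-- the ordered pair `(a(x),b(x))` is φ-quasi compatible. -/
def PairQC (φ : LZ) (a b : EW W) : Prop :=
  ∃ p : MvPowerSeries (Fin 2) ℂ, substMv p φ ≠ 0 ∧ IsLT2 (ps2Smul p (c2 a b))

/-- the ordered pair `(a(x),b(x))` is quasi compatible. -/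
def PairQuasiCompat (a b : EW W) : Prop :=
  ∃ p : MvPowerSeries (Fin 2) ℂ, p ≠ 0 ∧ IsLT2 (ps2Smul p (c2 a b))

/-- the raw coefficient function of the product `a₁(x₁)⋯a_r(x_r)` applied to `w`. -/
def prodCoeff : (r : ℕ) → (Fin r → EW W) → (Fin r → ℤ) → W → W
  | 0, _, _, w => w
  | r+1, as, ms, w =>
      ((as 0) (prodCoeff r (fun i => as i.succ) (fun i => ms i.succ) w)).coeff (ms 0)

/-- multiplication of a raw `r`-variable series by `P ∈ ℂ[[x₁,…,x_r]]`. -/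
def mvSmul {r : ℕ} (P : MvPowerSeries (Fin r) ℂ) (F : (Fin r → ℤ) → W) :
    (Fin r → ℤ) → W :=
  fun m => ∑ᶠ k : Fin r →₀ ℕ, MvPowerSeries.coeff (R := ℂ) k P • F (fun i => m i - k i)

/-- the series `p(x_i, x_j) ∈ ℂ[[x₁,…,x_r]]` obtained from `p(x₁,x₂) ∈ ℂ[[x₁,x₂]]`. -/
def pPair {r : ℕ} (p : MvPowerSeries (Fin 2) ℂ) (i j : Fin r) : MvPowerSeries (Fin r) ℂ :=
  fun k => if ∀ l, l ≠ i → l ≠ j → k l = 0 then MvPowerSeries.coeff (R := ℂ) (idx2 (k i) (k j)) p else 0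

/-- the product `Π_{1 ≤ i < j ≤ r} p(x_i,x_j) ∈ ℂ[[x₁,…,x_r]]`. -/
def bigP (r : ℕ) (p : MvPowerSeries (Fin 2) ℂ) : MvPowerSeries (Fin r) ℂ :=
  ∏ ij ∈ Finset.univ.filter (fun ij : Fin r × Fin r => ij.1 < ij.2), pPair p ij.1 ij.2

/-- a raw `r`-variable series `W → W[[x₁^{±1},…,x_r^{±1}]]` lies in `Hom(W, W((x₁,…,x_r)))`. -/
def IsLTrunc {r : ℕ} (F : W → (Fin r → ℤ) → W) : Prop :=
  ∀ w, ∃ N : ℤ, ∀ m : Fin r → ℤ, (∃ i, m i < N) → F w m = 0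

/-- the finite sequence `as` in `ℰ(W)` is φ-quasi compatible. -/
def SeqQC (φ : LZ) {r : ℕ} (as : Fin r → EW W) : Prop :=
  ∃ p : MvPowerSeries (Fin 2) ℂ, substMv p φ ≠ 0 ∧
    IsLTrunc (fun w => mvSmul (bigP r p) (fun m => prodCoeff r as m w))

/-- the finite sequence `as` in `ℰ(W)` is quasi compatible. -/
def SeqQuasiCompat {r : ℕ} (as : Fin r → EW W) : Prop :=
  ∃ p : MvPowerSeries (Fin 2) ℂ, p ≠ 0 ∧
    IsLTrunc (fun w => mvSmul (bigP r p) (fun m => prodCoeff r as m w))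

/-- the finite sequence `as` in `ℰ(W)` is compatible (modifier `(x₁-x₂)^k`). -/
def SeqCompat {r : ℕ} (as : Fin r → EW W) : Prop :=
  ∃ k : ℕ,
    IsLTrunc (fun w => mvSmul (bigP r ((MvPowerSeries.X 0 - MvPowerSeries.X 1) ^ k))
      (fun m => prodCoeff r as m w))

/-- a subset of `ℰ(W)` is φ-quasi compatible. -/
def SetQC (φ : LZ) (U : Set (EW W)) : Prop :=
  ∀ (r : ℕ) (as : Fin r → EW W), (∀ i, as i ∈ U) → SeqQC φ as

/-- a subset of `ℰ(W)` is quasi compatible. -/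
def SetQuasiCompat (U : Set (EW W)) : Prop :=
  ∀ (r : ℕ) (as : Fin r → EW W), (∀ i, as i ∈ U) → SeqQuasiCompat as

/-- a subset of `ℰ(W)` is compatible. -/
def SetCompat (U : Set (EW W)) : Prop :=
  ∀ (r : ℕ) (as : Fin r → EW W), (∀ i, as i ∈ U) → SeqCompat as

/-- a subspace `V ⊆ ℰ(W)` is `Y_ℰ^φ`-closed. -/
def YClosed (φ : LZ) (V : Submodule ℂ (EW W)) : Prop :=
  ∀ a ∈ V, ∀ b ∈ V, ∀ n : ℤ, YφCoef φ a b n ∈ V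

namespace Helper

lemma idx2_apply_zero (a b : ℕ) : (idx2 a b) 0 = a := by
  simp [idx2, Finsupp.single_apply]

lemma idx2_apply_one (a b : ℕ) : (idx2 a b) 1 = b := by
  simp [idx2, Finsupp.single_apply]

lemma idx2_eq (d : Fin 2 →₀ ℕ) : idx2 (d 0) (d 1) = d := by
  ext l
  fin_cases l
  · simpa using idx2_apply_zero (d 0) (d 1)
  · simpa using idx2_apply_one (d 0) (d 1)

/-- coefficients of p along idx2 -/
def Q (q : MvPowerSeries (Fin 2) ℂ) (a b : ℕ) : ℂ := MvPowerSeries.coeff (R := ℂ) (idx2 a b) q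

def D (q : MvPowerSeries (Fin 2) ℂ) (i s : ℕ) : ℂ :=
  ∑ a ∈ Finset.range (s+1), Q q a (s-a) * (a.choose i : ℂ)

lemma exists_D_ne (q : MvPowerSeries (Fin 2) ℂ) (hq : q ≠ 0) : ∃ i s, D q i s ≠ 0 := by
  by_contra hD
  push_neg at hD
  apply hq
  have key : ∀ t s a, a ≤ s → s ≤ a + t → Q q a (s - a) = 0 := by
    intro t
    induction t with
    | zero =>
      intro s a h1 h2
      have hsa : a = s := le_antisymm h1 (by omega)
      subst hsa
      have := hD a a
      rw [D, Finset.sum_eq_single_of_mem a (Finset.self_mem_range_succ a)] at this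
      · simpa using this
      · intro b hb hba
        have hbs : b < a := by simp at hb; omega
        simp [Nat.choose_eq_zero_of_lt hbs]
    | succ t ih =>
      intro s a h1 h2
      rcases le_or_gt s (a + t) with h | h
      · exact ih s a h1 h
      · have hs : s = a + t + 1 := by omega
        have := hD a s
        rw [D, Finset.sum_eq_single_of_mem a (by simp; omega)] at this
        · simpa using this
        · intro b hb hba
          rcases lt_or_gt_of_ne hba with hlt | hgt
          · simp [Nat.choose_eq_zero_of_lt hlt]
          · have : Q q b (s - b) = 0 := ih s b (by simp at hb; omega) (by omega)
            simp [this]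
  ext d
  have hd := key (d 0 + d 1) (d 0 + d 1) (d 0) (by omega) (by omega)
  rw [Q] at hd
  simp only [Nat.add_sub_cancel_left] at hd
  rw [idx2_eq] at hd
  simpa using hd


-- coefficient below order vanishes, including x = 0 case
lemma coeff_lt_order (x : L) (j : ℤ) (h : j < x.order) : x.coeff j = 0 := by
  by_cases hx : x = 0
  · simp [hx]
  · exact HahnSeries.coeff_eq_zero_of_lt_order h

variable (φ : LZ) (h0 : (PowerSeries.constantCoeff (R := L)) φ = Xl)

-- ψ and its leading z-exponent m
def ψ : LZ := φ - PowerSeries.C (R := L) Xl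

include h0 in
lemma psi_cc : (PowerSeries.constantCoeff (R := L)) (ψ φ) = 0 := by
  simp [ψ, h0]

lemma Xl_pow_mul_coeff (e : ℕ) (w : L) (j : ℤ) :
    (Xl ^ e * w).coeff j = w.coeff (j - e) := by
  have h1 : (Xl : L) ^ e = HahnSeries.single (e : ℤ) 1 := by
    rw [Xl, HahnSeries.single_pow]
    norm_num
  rw [h1]
  have := HahnSeries.coeff_single_mul_add (r := (1:ℂ)) (x := w) (b := (e:ℤ)) (a := j - e)
  rw [show (j - (e:ℤ)) + e = j by ring] at this
  rw [this, one_mul]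

-- expansion of the lz coefficient of φ^a x^b via binomial in ψ
lemma expand (a b : ℕ) (n : ℕ) (j : ℤ) :
    lzCoeff (φ ^ a * (PowerSeries.C (R := L) Xl) ^ b) n j =
      ∑ i ∈ Finset.range (a+1), (a.choose i : ℂ) *
        ((PowerSeries.coeff (R := L) n) ((ψ φ) ^ i)).coeff (j - ((a:ℤ) + b - i)) := by
  have hφ : φ = ψ φ + PowerSeries.C (R := L) Xl := by rw [ψ]; ring_nf
  rw [lzCoeff]
  conv_lhs => rw [hφ, add_pow]
  rw [Finset.sum_mul, map_sum]
  rw [show (∑ x ∈ Finset.range (a + 1), (PowerSeries.coeff (R := L) n)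
        (ψ φ ^ x * (PowerSeries.C (R := L)) Xl ^ (a - x) * ↑(a.choose x) * (PowerSeries.C (R := L)) Xl ^ b)).coeff j
      = ∑ x ∈ Finset.range (a + 1), ((PowerSeries.coeff (R := L) n)
        (ψ φ ^ x * (PowerSeries.C (R := L)) Xl ^ (a - x) * ↑(a.choose x) * (PowerSeries.C (R := L)) Xl ^ b)).coeff j
      from map_sum (HahnSeries.coeff.addMonoidHom j) _ _]
  apply Finset.sum_congr rfl
  intro i hi
  have hia : i ≤ a := by simpa [Nat.lt_succ_iff] using hi
  have : (ψ φ) ^ i * (PowerSeries.C (R := L) Xl) ^ (a - i) * (a.choose i : LZ) * (PowerSeries.C (R := L) Xl) ^ b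
      = (a.choose i : LZ) * ((PowerSeries.C (R := L) (Xl ^ (a - i + b))) * (ψ φ) ^ i) := by
    rw [map_pow, pow_add]
    ring_nf
  rw [this]
  have hnat : ((a.choose i : ℕ) : LZ) = PowerSeries.C (R := L) ((a.choose i : ℕ) : L) := by
    simp
  rw [hnat, ← mul_assoc, ← map_mul, PowerSeries.coeff_C_mul]
  show ((a.choose i : ℕ) * Xl ^ (a - i + b) * ((PowerSeries.coeff (R := L) n) (ψ φ ^ i))).coeff j = _
  rw [mul_assoc, show ((a.choose i : ℕ) : L) * (Xl ^ (a-i+b) * ((PowerSeries.coeff (R := L) n) (ψ φ ^ i)))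
      = (a.choose i : ℕ) • (Xl ^ (a-i+b) * ((PowerSeries.coeff (R := L) n) (ψ φ ^ i))) by
        rw [nsmul_eq_mul]]
  rw [show ((a.choose i : ℕ) • (Xl ^ (a-i+b) * ((PowerSeries.coeff (R := L) n) (ψ φ ^ i)))).coeff j
      = (a.choose i : ℕ) • ((Xl ^ (a-i+b) * ((PowerSeries.coeff (R := L) n) (ψ φ ^ i))).coeff j) by
        rw [HahnSeries.coeff_nsmul]; rfl]
  rw [Xl_pow_mul_coeff]
  have hc : ((a - i + b : ℕ) : ℤ) = (a:ℤ) + b - i := by omega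
  rw [hc, nsmul_eq_mul]



lemma rep (q : MvPowerSeries (Fin 2) ℂ) (φ : LZ) (n : ℕ) (j : ℤ) (On : ℤ)
    (hOn : ∀ i ≤ n, On ≤ ((PowerSeries.coeff (R := L) n) ((ψ φ)^i)).order)
    (hψn : ∀ i, n < i → (PowerSeries.coeff (R := L) n) ((ψ φ)^i) = 0)
    (M : ℕ) (hM : j + n - On ≤ M) :
    (∑ᶠ ab : ℕ × ℕ, Q q ab.1 ab.2 * lzCoeff (φ ^ ab.1 * (PowerSeries.C (R := L) Xl) ^ ab.2) n j)
    = ∑ i ∈ Finset.range (M+1), ∑ s ∈ Finset.range (M+1),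
        D q i s * ((PowerSeries.coeff (R := L) n) ((ψ φ)^i)).coeff (j - s + i) := by
  classical
  set F : ℕ × ℕ → ℂ := fun ab => Q q ab.1 ab.2 *
    lzCoeff (φ ^ ab.1 * (PowerSeries.C (R := L) Xl) ^ ab.2) n j with hF
  have hvan : ∀ a b : ℕ, (M:ℤ) < (a:ℤ) + b →
      lzCoeff (φ ^ a * (PowerSeries.C (R := L) Xl) ^ b) n j = 0 := by
    intro a b hab
    rw [expand]
    apply Finset.sum_eq_zero
    intro i hi
    have hia : i ≤ a := by simpa [Nat.lt_succ_iff] using hi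
    by_cases hin : i ≤ n
    · have hlt : j - ((a:ℤ) + b - i) < ((PowerSeries.coeff (R := L) n) ((ψ φ)^i)).order := by
        have h2 : j - ((a:ℤ) + b - i) < On := by omega
        exact lt_of_lt_of_le h2 (hOn i hin)
      rw [coeff_lt_order _ _ hlt, mul_zero]
    · rw [hψn i (by omega), HahnSeries.coeff_zero, mul_zero]
  set T : Finset (ℕ × ℕ) := (Finset.range (M+1)).biUnion Finset.HasAntidiagonal.antidiagonal with hT
  have hsub : Function.support F ⊆ ↑T := by
    intro ab hab
    simp only [Function.mem_support, hF] at hab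
    have hlz : lzCoeff (φ ^ ab.1 * (PowerSeries.C (R := L) Xl) ^ ab.2) n j ≠ 0 := by
      intro h; exact hab (by rw [h, mul_zero])
    have hab2 : (ab.1:ℤ) + ab.2 ≤ M := by
      by_contra hc; push_neg at hc; exact hlz (hvan ab.1 ab.2 hc)
    simp only [hT, Finset.coe_biUnion, Set.mem_iUnion, Finset.mem_coe, Finset.mem_biUnion]
    exact ⟨ab.1 + ab.2, Finset.mem_range.2 (by omega), Finset.HasAntidiagonal.mem_antidiagonal.2 rfl⟩
  rw [finsum_eq_sum_of_support_subset F hsub]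
  have hdisj : Set.PairwiseDisjoint ↑(Finset.range (M+1))
      (fun s : ℕ => (Finset.HasAntidiagonal.antidiagonal s : Finset (ℕ × ℕ))) := by
    intro s _ t _ hst
    apply Finset.disjoint_left.2
    intro p hp hp'
    exact hst ((Finset.HasAntidiagonal.mem_antidiagonal.1 hp).symm.trans (Finset.HasAntidiagonal.mem_antidiagonal.1 hp'))
  rw [hT, Finset.sum_biUnion hdisj]
  have hstep : ∀ s ∈ Finset.range (M+1), ∑ p ∈ Finset.HasAntidiagonal.antidiagonal s, F p
      = ∑ i ∈ Finset.range (M+1), ∑ p ∈ Finset.HasAntidiagonal.antidiagonal s,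
          Q q p.1 p.2 * (p.1.choose i : ℂ) *
            ((PowerSeries.coeff (R := L) n) ((ψ φ)^i)).coeff (j - s + i) := by
    intro s hs
    rw [Finset.sum_comm]
    apply Finset.sum_congr rfl
    intro p hp
    have hps : p.1 + p.2 = s := Finset.HasAntidiagonal.mem_antidiagonal.1 hp
    have hp1 : p.1 ≤ M := by have := Finset.mem_range.1 hs; omega
    rw [hF]
    simp only
    rw [expand, Finset.mul_sum]
    rw [Finset.sum_subset (Finset.range_subset_range.2 (show p.1+1 ≤ M+1 by omega))
        (fun i _ hi => by
          have h1 : p.1 < i := by simpa [Nat.lt_succ_iff] using hi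
          simp [Nat.choose_eq_zero_of_lt h1])]
    apply Finset.sum_congr rfl
    intro i _
    have hps2 : j - ((p.1:ℤ) + p.2 - i) = j - s + i := by
      have : (p.1:ℤ) + p.2 = s := by exact_mod_cast congrArg (Nat.cast : ℕ → ℤ) hps
      omega
    rw [hps2]; ring_nf
  rw [Finset.sum_congr rfl hstep, Finset.sum_comm]
  apply Finset.sum_congr rfl
  intro i _
  apply Finset.sum_congr rfl
  intro s _
  rw [D, ← Finset.sum_mul, Finset.Nat.sum_antidiagonal_eq_sum_range_succ_mk]


lemma psi_pow_coeff_of_lt (x : LZ) (m : ℕ)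
    (hmin : ∀ n, n < m → PowerSeries.coeff (R := L) n x = 0) :
    ∀ i n, n < i * m → PowerSeries.coeff (R := L) n (x ^ i) = 0 := by
  intro i
  induction i with
  | zero => intro n hn; omega
  | succ i ih =>
    intro n hn
    rw [pow_succ, PowerSeries.coeff_mul]
    apply Finset.sum_eq_zero
    intro p hp
    have hps : p.1 + p.2 = n := Finset.HasAntidiagonal.mem_antidiagonal.1 hp
    by_cases h2 : p.2 < m
    · rw [hmin p.2 h2, mul_zero]
    · have : p.1 < i * m := by
        have h1 : (i+1) * m = i * m + m := by rw [Nat.add_mul, one_mul]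
        have h2' : Nat.succ i * m = (i+1) * m := rfl
        omega
      rw [ih p.1 this, zero_mul]

lemma psi_pow_coeff_top (x : LZ) (m : ℕ)
    (hmin : ∀ n, n < m → PowerSeries.coeff (R := L) n x = 0) :
    ∀ i, PowerSeries.coeff (R := L) (i * m) (x ^ i) = (PowerSeries.coeff (R := L) m x) ^ i := by
  intro i
  induction i with
  | zero => simp
  | succ i ih =>
    rw [pow_succ, PowerSeries.coeff_mul]
    rw [Finset.sum_eq_single_of_mem (i * m, m)
        (Finset.HasAntidiagonal.mem_antidiagonal.2 (by rw [Nat.succ_mul]))]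
    · rw [ih, pow_succ]
    · intro p hp hne
      have hps : p.1 + p.2 = (i+1) * m := Finset.HasAntidiagonal.mem_antidiagonal.1 hp
      by_cases h2 : p.2 < m
      · rw [hmin p.2 h2, mul_zero]
      · have h1 : p.1 < i * m := by
          rcases Nat.lt_or_ge p.1 (i * m) with h | h
          · exact h
          · exfalso; apply hne
            have hsm : (i+1) * m = i * m + m := by rw [Nat.add_mul, one_mul]
            have hsm2 : Nat.succ i * m = (i+1) * m := rfl
            have : p.1 = i * m := by omega
            have : p.2 = m := by omega
            exact Prod.ext (by omega) this
        rw [psi_pow_coeff_of_lt x m hmin i p.1 h1, zero_mul]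

def cf (q : MvPowerSeries (Fin 2) ℂ) (φ : LZ) (n : ℕ) (j : ℤ) : ℂ :=
  ∑ᶠ ab : ℕ × ℕ, Q q ab.1 ab.2 * lzCoeff (φ ^ ab.1 * (PowerSeries.C (R := L) Xl) ^ ab.2) n j

lemma cf_eq_zero_of_lt (q : MvPowerSeries (Fin 2) ℂ) (φ : LZ) (n : ℕ) (j : ℤ) (On : ℤ)
    (hOn : ∀ i ≤ n, On ≤ ((PowerSeries.coeff (R := L) n) ((ψ φ)^i)).order)
    (hψn : ∀ i, n < i → (PowerSeries.coeff (R := L) n) ((ψ φ)^i) = 0)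
    (hj : j < On) : cf q φ n j = 0 := by
  apply finsum_eq_zero_of_forall_eq_zero
  rintro ⟨a, b⟩
  simp only
  rw [expand]
  rw [Finset.sum_eq_zero, mul_zero]
  intro i hi
  have hia : i ≤ a := by simpa [Nat.lt_succ_iff] using hi
  by_cases hin : i ≤ n
  · have hlt : j - ((a:ℤ) + b - i) < ((PowerSeries.coeff (R := L) n) ((ψ φ)^i)).order := by
      have : j - ((a:ℤ) + b - i) < On := by omega
      exact lt_of_lt_of_le this (hOn i hin)
    rw [coeff_lt_order _ _ hlt, mul_zero]
  · rw [hψn i (by omega), HahnSeries.coeff_zero, mul_zero]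


lemma substMv_eq_mkLZ_cf (q : MvPowerSeries (Fin 2) ℂ) (φ : LZ) :
    substMv q φ = mkLZ (cf q φ) := rfl

lemma substMv_ne_zero (φ : LZ) (h0 : (PowerSeries.constantCoeff (R := L)) φ = Xl)
    (hx : φ ≠ PowerSeries.C (R := L) Xl) (q : MvPowerSeries (Fin 2) ℂ) (hq : q ≠ 0) :
    substMv q φ ≠ 0 := by
  have hψ : ψ φ ≠ 0 := sub_ne_zero.2 hx
  have hex : ∃ n, PowerSeries.coeff (R := L) n (ψ φ) ≠ 0 := by
    by_contra h; push_neg at h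
    exact hψ (PowerSeries.ext fun n => by simpa using h n)
  set m := Nat.find hex with hmdef
  have hm_ne : PowerSeries.coeff (R := L) m (ψ φ) ≠ 0 := Nat.find_spec hex
  have hm_min : ∀ n, n < m → PowerSeries.coeff (R := L) n (ψ φ) = 0 := by
    intro n hn
    exact not_not.mp (Nat.find_min hex hn)
  have hm1 : 1 ≤ m := by
    by_contra h
    apply hm_ne
    have hm0 : m = 0 := by omega
    rw [hm0, PowerSeries.coeff_zero_eq_constantCoeff]
    exact psi_cc φ h0
  have hψn : ∀ n i : ℕ, n < i → (PowerSeries.coeff (R := L) n) ((ψ φ)^i) = 0 := by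
    intro n i hni
    apply psi_pow_coeff_of_lt _ m hm_min
    calc n < i := hni
    _ ≤ i * m := Nat.le_mul_of_pos_right i (by omega)
  -- order lower bounds
  have hOn' : ∀ n : ℕ, ∃ On : ℤ, ∀ i ≤ n, On ≤ ((PowerSeries.coeff (R := L) n) ((ψ φ)^i)).order := by
    intro n
    refine ⟨(Finset.range (n+1)).inf' ⟨0, by simp⟩
      (fun i => ((PowerSeries.coeff (R := L) n) ((ψ φ)^i)).order), ?_⟩
    intro i hi
    exact Finset.inf'_le _ (Finset.mem_range.2 (by omega))
  choose On hOn using hOn'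
  -- existence of the substituted series
  have hg : ∃ g : LZ, ∀ n j, lzCoeff g n j = cf q φ n j := by
    have hpwo : ∀ n : ℕ, (Function.support (fun j => cf q φ n j)).IsPWO := by
      intro n
      have hbdd : BddBelow (Function.support (fun j => cf q φ n j)) := by
        refine ⟨On n, fun j hj => ?_⟩
        by_contra hc
        push_neg at hc
        exact hj (cf_eq_zero_of_lt q φ n j (On n) (hOn n) (hψn n) hc)
      exact Set.IsWF.isPWO hbdd.wellFoundedOn_lt
    exact ⟨PowerSeries.mk (fun n => ⟨fun j => cf q φ n j, hpwo n⟩), fun n j => by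
      rw [lzCoeff, PowerSeries.coeff_mk]⟩
  have hcoeff : ∀ n j, lzCoeff (substMv q φ) n j = cf q φ n j := by
    intro n j
    rw [substMv_eq_mkLZ_cf, mkLZ, dif_pos hg]
    exact hg.choose_spec n j
  -- the distinguished coefficient
  have hDex : ∃ i, ∃ s, D q i s ≠ 0 := by
    obtain ⟨i, s, h⟩ := exists_D_ne q hq
    exact ⟨i, s, h⟩
  set k := Nat.find hDex with hkdef
  have hk_spec : ∃ s, D q k s ≠ 0 := Nat.find_spec hDex
  have hk_min : ∀ i, i < k → ∀ s, D q i s = 0 := by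
    intro i hi s
    have := Nat.find_min hDex hi
    push_neg at this
    exact this s
  set s₀ := Nat.find hk_spec with hs0def
  have hs0 : D q k s₀ ≠ 0 := Nat.find_spec hk_spec
  have hs0_min : ∀ s, s < s₀ → D q k s = 0 := by
    intro s hs
    have := Nat.find_min hk_spec hs
    simpa using this
  set n₀ := k * m with hn0def
  set u : L := (PowerSeries.coeff (R := L) m (ψ φ)) ^ k with hudef
  have hWtop : PowerSeries.coeff (R := L) n₀ ((ψ φ)^k) = u := psi_pow_coeff_top _ m hm_min k
  have hu : u ≠ 0 := pow_ne_zero _ hm_ne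
  set e₀ := u.order with he0def
  set j₀ : ℤ := (s₀ : ℤ) - k + e₀ with hj0def
  set M : ℕ := (j₀ + n₀ - On n₀).toNat + k + s₀ + 1 with hMdef
  have hM : j₀ + n₀ - On n₀ ≤ (M : ℤ) := by
    rw [hMdef]; push_cast; omega
  have hrep : cf q φ n₀ j₀ = ∑ i ∈ Finset.range (M+1), ∑ s ∈ Finset.range (M+1),
      D q i s * ((PowerSeries.coeff (R := L) n₀) ((ψ φ)^i)).coeff (j₀ - s + i) :=
    rep q φ n₀ j₀ (On n₀) (hOn n₀) (fun i hi => hψn n₀ i hi) M hM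
  have hkM : k ≤ M := by rw [hMdef]; omega
  have hsM : s₀ ≤ M := by rw [hMdef]; omega
  have heval : cf q φ n₀ j₀ = D q k s₀ * u.coeff e₀ := by
    rw [hrep]
    rw [Finset.sum_eq_single_of_mem k (Finset.mem_range.2 (by omega))]
    · rw [Finset.sum_eq_single_of_mem s₀ (Finset.mem_range.2 (by omega))]
      · rw [hWtop]
        congr 1
        rw [hj0def]; ring_nf
      · intro s hs hne
        rcases lt_or_gt_of_ne hne with hlt | hgt
        · rw [hs0_min s hlt, zero_mul]
        · have hco : j₀ - s + k < e₀ := by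
            rw [hj0def]; omega
          rw [hWtop, coeff_lt_order _ _ (by rw [← he0def]; exact hco), mul_zero]
    · intro i hi hne
      rcases lt_or_gt_of_ne hne with hlt | hgt
      · apply Finset.sum_eq_zero; intro s _; rw [hk_min i hlt s, zero_mul]
      · have hlt2 : n₀ < i * m := by
          rw [hn0def]
          exact (Nat.mul_lt_mul_right (show 0 < m by omega)).2 hgt
        apply Finset.sum_eq_zero; intro s _
        rw [psi_pow_coeff_of_lt _ m hm_min i n₀ hlt2, HahnSeries.coeff_zero, mul_zero]
  intro hzero
  have hz := hcoeff n₀ j₀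
  rw [hzero] at hz
  have h00 : lzCoeff (0:LZ) n₀ j₀ = 0 := by rw [lzCoeff]; simp
  rw [h00] at hz
  exact mul_ne_zero hs0 (mt HahnSeries.coeff_order_eq_zero.1 hu) (heval.symm.trans hz.symm)


end Helper

/-- Let `φ` be an associate of `F_a` with `φ(x,z) ≠ x` and `W` a complex vector space.
Every compatible subset of `ℰ(W)` is φ-quasi compatible, and every quasi compatible
subset of `ℰ(W)` is φ-quasi compatible. -/
theorem compat_implies_phi_quasicompat
    (φ : LZ) (h : IsAssociate φ) (hx : φ ≠ PowerSeries.C (R := L) Xl) (U : Set (EW W)) :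
    (SetCompat U → SetQC φ U) ∧ (SetQuasiCompat U → SetQC φ U) := by
  have key : ∀ p : MvPowerSeries (Fin 2) ℂ, p ≠ 0 → substMv p φ ≠ 0 :=
    fun p hp => Helper.substMv_ne_zero φ h.1 hx p hp
  have hX01 : (MvPowerSeries.X 0 - MvPowerSeries.X 1 : MvPowerSeries (Fin 2) ℂ) ≠ 0 := by
    intro hc
    have h2 := congrArg (MvPowerSeries.coeff (R := ℂ) (Finsupp.single (0 : Fin 2) 1)) hc
    rw [map_sub, MvPowerSeries.coeff_X, MvPowerSeries.coeff_X, map_zero] at h2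
    rw [if_pos rfl, if_neg (by
      intro hcc
      have := DFunLike.congr_fun hcc (0 : Fin 2)
      simp [Finsupp.single_apply] at this)] at h2
    simp at h2
  refine ⟨?_, ?_⟩
  · intro hc r as hU
    obtain ⟨kk, hk⟩ := hc r as hU
    exact ⟨_, key _ (pow_ne_zero _ hX01), hk⟩
  · intro hc r as hU
    obtain ⟨p, hp0, hk⟩ := hc r as hU
    exact ⟨p, key p hp0, hk⟩
end
end
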